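/- arXiv:1805.03570 — 4 statements merged into one kernel-verified Lean document; each statement's English description precedes it below -/
import Mathlib

section
/- Assume 1/(2q1) + 1/q2 + 1/q3 < 1 < Q. Fix x1, x2, x3 > 0 and define f1(u1,u2,u3) := 1(0 < u2 < x2)·1(0 < u3 < x3) · ∫_0^{x1} ∫_ℝ ∫_ℝ (c1·|t1−u1|^{q1/ν} + c2·|t2|^{q2/ν} + c3·|t3|^{q3/ν})^{−ν} dt1 dt2 dt3. Then ∫_{ℝ³} f1(u)² du < ∞ (in particular the inner integral is finite for almost every u ∈ ℝ³), i.e. the Gaussian random field 𝒴₁ of the paper is well defined. -/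
set_option maxHeartbeats 1000000
open MeasureTheory Set
open scoped ENNReal

noncomputable section

-- neg change of variables
lemma lint_neg (f : ℝ → ℝ≥0∞) (s : Set ℝ) :
    ∫⁻ t in (fun x : ℝ => -x) ⁻¹' s, f (-t) = ∫⁻ t in s, f t :=
  (Measure.measurePreserving_neg (volume : Measure ℝ)).setLIntegral_comp_preimage_emb
    (Homeomorph.neg ℝ).measurableEmbedding f s

-- shift change of variables
lemma lint_shift (f : ℝ → ℝ≥0∞) (u : ℝ) (s : Set ℝ) :
    ∫⁻ t in (fun x : ℝ => x + u) ⁻¹' s, f (t + u) = ∫⁻ t in s, f t :=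
  (measurePreserving_add_right (volume : Measure ℝ) u).setLIntegral_comp_preimage_emb
    (Homeomorph.addRight u).measurableEmbedding f s

lemma lint_Ioi_rpow {r R : ℝ} (hr : r < -1) (hR : 0 < R) :
    ∫⁻ t in Ioi R, ENNReal.ofReal (|t| ^ r) = ENNReal.ofReal (R ^ (r + 1) / (-(r + 1))) := by
  have h1 : ∫⁻ t in Ioi R, ENNReal.ofReal (|t| ^ r) = ∫⁻ t in Ioi R, ENNReal.ofReal (t ^ r) := by
    refine setLIntegral_congr_fun measurableSet_Ioi ?_
    intro t ht
    simp only [abs_of_pos (hR.trans ht)]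
  rw [h1, ← ofReal_integral_eq_lintegral_ofReal (integrableOn_Ioi_rpow_of_lt hr hR)
    (ae_restrict_of_forall_mem measurableSet_Ioi fun t ht => Real.rpow_nonneg (le_of_lt (hR.trans ht)) r)]
  rw [integral_Ioi_rpow_of_lt hr hR, div_neg, neg_div]

lemma lint_tail {r R : ℝ} (hr : r < -1) (hR : 0 < R) :
    ∫⁻ t in (Icc (-R) R)ᶜ, ENNReal.ofReal (|t| ^ r)
      ≤ ENNReal.ofReal (2 * (R ^ (r + 1) / (-(r + 1)))) := by
  have hc : (Icc (-R) R)ᶜ = Iio (-R) ∪ Ioi R := by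
    ext x
    simp only [mem_compl_iff, mem_Icc, not_and_or, not_le, mem_union, mem_Iio, mem_Ioi]
  have hneg : ∫⁻ t in Iio (-R), ENNReal.ofReal (|t| ^ r)
      = ∫⁻ t in Ioi R, ENNReal.ofReal (|t| ^ r) := by
    have hpre : (fun x : ℝ => -x) ⁻¹' (Ioi R) = Iio (-R) := by
      ext x; simp [lt_neg]
    rw [← hpre, ← lint_neg (fun t => ENNReal.ofReal (|t| ^ r)) (Ioi R)]
    simp
  rw [hc]
  calc ∫⁻ t in Iio (-R) ∪ Ioi R, ENNReal.ofReal (|t| ^ r)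
      ≤ (∫⁻ t in Iio (-R), ENNReal.ofReal (|t| ^ r))
        + ∫⁻ t in Ioi R, ENNReal.ofReal (|t| ^ r) := lintegral_union_le _ _ _
    _ = 2 * ENNReal.ofReal (R ^ (r + 1) / (-(r + 1))) := by
        rw [hneg, lint_Ioi_rpow hr hR, two_mul]
    _ = ENNReal.ofReal (2 * (R ^ (r + 1) / (-(r + 1)))) := by
        rw [ENNReal.ofReal_mul (by norm_num)]
        simp

lemma L1 {c p m : ℝ} (hc : 0 < c) (hp : 0 < p) (hm : 0 < m) (h1 : 1 < m * p) :
    ∃ K : ℝ, 0 < K ∧ ∀ a : ℝ, 0 < a →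
      ∫⁻ t : ℝ, ENNReal.ofReal ((a + c * |t| ^ p) ^ (-m))
        ≤ ENNReal.ofReal (K * a ^ (1 / p - m)) := by
  have hK : 0 < c ^ (-(1 / p)) * (2 + 2 / (m * p - 1)) := by
    have h2 : 0 < 2 / (m * p - 1) := div_pos two_pos (by linarith)
    have := Real.rpow_pos_of_pos hc (-(1 / p))
    nlinarith
  refine ⟨c ^ (-(1 / p)) * (2 + 2 / (m * p - 1)), hK, fun a ha => ?_⟩
  set R : ℝ := (a / c) ^ (1 / p) with hRdef
  have hR : 0 < R := Real.rpow_pos_of_pos (div_pos ha hc) _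
  set r : ℝ := -(m * p) with hrdef
  have hr : r < -1 := by rw [hrdef]; linarith
  -- pointwise bound
  have hpt : ∀ t : ℝ, ENNReal.ofReal ((a + c * |t| ^ p) ^ (-m))
      ≤ (Icc (-R) R).indicator (fun _ => ENNReal.ofReal (a ^ (-m))) t
        + (Icc (-R) R)ᶜ.indicator (fun t => ENNReal.ofReal (c ^ (-m) * |t| ^ r)) t := by
    intro t
    by_cases ht : t ∈ Icc (-R) R
    · rw [indicator_of_mem ht, indicator_of_notMem (by simp [ht])]
      rw [add_zero]
      refine ENNReal.ofReal_le_ofReal ?_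
      exact Real.rpow_le_rpow_of_nonpos ha (le_add_of_nonneg_right (by positivity))
        (neg_nonpos.mpr hm.le)
    · rw [indicator_of_notMem ht, indicator_of_mem (by simp [ht]), zero_add]
      refine ENNReal.ofReal_le_ofReal ?_
      have htR : R < |t| := by
        rcases lt_or_ge t 0 with h | h
        · simp only [mem_Icc, not_and_or, not_le] at ht
          rcases ht with h' | h'
          · rwa [abs_of_neg h, lt_neg]
          · linarith [abs_nonneg t]
        · simp only [mem_Icc, not_and_or, not_le] at ht
          rcases ht with h' | h'
          · linarith
          · rwa [abs_of_nonneg h]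
      have htpos : 0 < |t| := hR.trans htR
      have h2 : (a + c * |t| ^ p) ^ (-m) ≤ (c * |t| ^ p) ^ (-m) :=
        Real.rpow_le_rpow_of_nonpos (by positivity)
          (le_add_of_nonneg_left ha.le) (neg_nonpos.mpr hm.le)
      refine h2.trans_eq ?_
      rw [Real.mul_rpow hc.le (by positivity), ← Real.rpow_mul (abs_nonneg t)]
      rw [hrdef]; ring_nf
  calc ∫⁻ t : ℝ, ENNReal.ofReal ((a + c * |t| ^ p) ^ (-m))
      ≤ ∫⁻ t : ℝ, ((Icc (-R) R).indicator (fun _ => ENNReal.ofReal (a ^ (-m))) t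
        + (Icc (-R) R)ᶜ.indicator (fun t => ENNReal.ofReal (c ^ (-m) * |t| ^ r)) t) :=
        lintegral_mono hpt
    _ = ENNReal.ofReal (a ^ (-m)) * volume (Icc (-R) R)
        + ∫⁻ t in (Icc (-R) R)ᶜ, ENNReal.ofReal (c ^ (-m) * |t| ^ r) := by
        rw [lintegral_add_left (measurable_const.indicator measurableSet_Icc), lintegral_indicator measurableSet_Icc,
          lintegral_indicator measurableSet_Icc.compl, setLIntegral_const]
    _ ≤ ENNReal.ofReal (a ^ (-m)) * ENNReal.ofReal (2 * R)
        + ENNReal.ofReal (c ^ (-m)) * ENNReal.ofReal (2 * (R ^ (r + 1) / (-(r + 1)))) := by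
        gcongr
        · rw [Real.volume_Icc]
          exact ENNReal.ofReal_le_ofReal (by linarith)
        · simp_rw [ENNReal.ofReal_mul (by positivity : (0:ℝ) ≤ c ^ (-m))]
          rw [lintegral_const_mul _ (by fun_prop)]
          gcongr
          exact lint_tail hr hR
    _ ≤ ENNReal.ofReal (c ^ (-(1 / p)) * (2 + 2 / (m * p - 1)) * a ^ (1 / p - m)) := by
        rw [← ENNReal.ofReal_mul (by positivity : (0:ℝ) ≤ a ^ (-m)),
          ← ENNReal.ofReal_mul (by positivity : (0:ℝ) ≤ c ^ (-m)),
          ← ENNReal.ofReal_add (mul_nonneg (by positivity) (by linarith))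
            (show (0:ℝ) ≤ c ^ (-m) * (2 * (R ^ (r + 1) / -(r + 1))) from
              mul_nonneg (by positivity) (mul_nonneg (by norm_num)
                (div_nonneg (Real.rpow_nonneg hR.le _)
                  (by simp only [hrdef]; linarith))))]
        refine ENNReal.ofReal_le_ofReal (le_of_eq ?_)
        have hRe : R = a ^ (1 / p) * c ^ (-(1 / p)) := by
          rw [hRdef, Real.div_rpow ha.le hc.le, Real.rpow_neg hc.le, div_eq_mul_inv]
        have hr1 : r + 1 = 1 - m * p := by rw [hrdef]; ring
        have hRr : R ^ (r + 1) = a ^ (1 / p - m) * c ^ (-(1 / p) + m) := by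
          rw [hRe, Real.mul_rpow (by positivity) (by positivity),
            ← Real.rpow_mul ha.le, ← Real.rpow_mul hc.le, hr1]
          congr 1
          · congr 1
            field_simp
          · congr 1
            field_simp
            ring
        have hca : c ^ (-m) * (a ^ (1 / p - m) * c ^ (-(1 / p) + m))
            = a ^ (1 / p - m) * c ^ (-(1 / p)) := by
          rw [mul_comm (c ^ (-m)) _, mul_assoc, ← Real.rpow_add hc]
          ring_nf
        have haa : a ^ (-m) * (a ^ (1 / p)) = a ^ (1 / p - m) := by
          rw [← Real.rpow_add ha]; ring_nf
        have hneg1 : -(r + 1) = m * p - 1 := by rw [hr1]; ring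
        rw [hRr, hRe, hneg1]
        calc a ^ (-m) * (2 * (a ^ (1 / p) * c ^ (-(1 / p))))
            + c ^ (-m) * (2 * (a ^ (1 / p - m) * c ^ (-(1 / p) + m) / (m * p - 1)))
            = 2 * (a ^ (-m) * a ^ (1 / p)) * c ^ (-(1 / p))
              + (2 / (m * p - 1)) * (c ^ (-m) * (a ^ (1 / p - m) * c ^ (-(1 / p) + m))) := by
              ring
          _ = 2 * a ^ (1 / p - m) * c ^ (-(1 / p))
              + (2 / (m * p - 1)) * (a ^ (1 / p - m) * c ^ (-(1 / p))) := by rw [haa, hca]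
          _ = c ^ (-(1 / p)) * (2 + 2 / (m * p - 1)) * a ^ (1 / p - m) := by ring

lemma L2gen {c2 c3 p2 p3 m : ℝ} (hc2 : 0 < c2) (hc3 : 0 < c3) (hp2 : 0 < p2)
    (hp3 : 0 < p3) (hm : 0 < m) (hm3 : 1 < m * p3) (hpos : 0 < m - 1 / p3)
    (hm2 : 1 < (m - 1 / p3) * p2) :
    ∃ K : ℝ, 0 < K ∧ ∀ b : ℝ, 0 < b →
      ∫⁻ t2 : ℝ, ∫⁻ t3 : ℝ,
          ENNReal.ofReal ((b + c2 * |t2| ^ p2 + c3 * |t3| ^ p3) ^ (-m))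
        ≤ ENNReal.ofReal (K * b ^ (1 / p2 - (m - 1 / p3))) := by
  obtain ⟨K3, hK3, hB3⟩ := L1 hc3 hp3 hm hm3
  obtain ⟨K2, hK2, hB2⟩ := L1 hc2 hp2 hpos hm2
  refine ⟨K3 * K2, mul_pos hK3 hK2, fun b hb => ?_⟩
  calc ∫⁻ t2 : ℝ, ∫⁻ t3 : ℝ,
          ENNReal.ofReal ((b + c2 * |t2| ^ p2 + c3 * |t3| ^ p3) ^ (-m))
      ≤ ∫⁻ t2 : ℝ, ENNReal.ofReal K3
          * ENNReal.ofReal ((b + c2 * |t2| ^ p2) ^ (-(m - 1 / p3))) := by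
        refine lintegral_mono fun t2 => ?_
        have ha : 0 < b + c2 * |t2| ^ p2 := by positivity
        have h3 := hB3 (b + c2 * |t2| ^ p2) ha
        calc ∫⁻ t3 : ℝ,
            ENNReal.ofReal ((b + c2 * |t2| ^ p2 + c3 * |t3| ^ p3) ^ (-m))
            ≤ ENNReal.ofReal (K3 * (b + c2 * |t2| ^ p2) ^ (1 / p3 - m)) := h3
          _ = ENNReal.ofReal K3
              * ENNReal.ofReal ((b + c2 * |t2| ^ p2) ^ (-(m - 1 / p3))) := by
              rw [ENNReal.ofReal_mul hK3.le, show 1 / p3 - m = -(m - 1 / p3) by ring]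
    _ = ENNReal.ofReal K3
        * ∫⁻ t2 : ℝ, ENNReal.ofReal ((b + c2 * |t2| ^ p2) ^ (-(m - 1 / p3))) := by
        rw [lintegral_const_mul _ (by fun_prop)]
    _ ≤ ENNReal.ofReal K3 * ENNReal.ofReal (K2 * b ^ (1 / p2 - (m - 1 / p3))) := by
        gcongr
        exact hB2 b hb
    _ = ENNReal.ofReal (K3 * K2 * b ^ (1 / p2 - (m - 1 / p3))) := by
        rw [← ENNReal.ofReal_mul hK3.le, mul_assoc]

lemma Lsym {r X : ℝ} (hr1 : -1 < r) (hr0 : r < 0) (hX : 0 < X) :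
    ∫⁻ s in Icc (-X) X, ENNReal.ofReal (|s| ^ r)
      ≤ ENNReal.ofReal (2 * (X ^ (r + 1) / (r + 1))) := by
  have hpos : ∫⁻ s in Ioc 0 X, ENNReal.ofReal (|s| ^ r)
      = ENNReal.ofReal (X ^ (r + 1) / (r + 1)) := by
    have h1 : ∫⁻ s in Ioc 0 X, ENNReal.ofReal (|s| ^ r)
        = ∫⁻ s in Ioc 0 X, ENNReal.ofReal (s ^ r) := by
      refine setLIntegral_congr_fun measurableSet_Ioc ?_
      intro s hs
      simp only [abs_of_pos hs.1]
    have hint : IntegrableOn (fun s : ℝ => s ^ r) (Ioc 0 X) := by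
      have := (intervalIntegral.intervalIntegrable_rpow' (a := 0) (b := X) hr1)
      rwa [intervalIntegrable_iff, uIoc_of_le hX.le] at this
    rw [h1, ← ofReal_integral_eq_lintegral_ofReal hint
      (ae_restrict_of_forall_mem measurableSet_Ioc fun s hs =>
        Real.rpow_nonneg hs.1.le r)]
    congr 1
    rw [← intervalIntegral.integral_of_le hX.le,
      integral_rpow (Or.inl hr1), Real.zero_rpow (by linarith), sub_zero]
  have hneg : ∫⁻ s in Icc (-X) 0, ENNReal.ofReal (|s| ^ r)
      = ∫⁻ s in Icc 0 X, ENNReal.ofReal (|s| ^ r) := by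
    have hpre : (fun x : ℝ => -x) ⁻¹' (Icc 0 X) = Icc (-X) 0 := by
      ext x
      simp only [mem_preimage, mem_Icc, neg_le, le_neg]
      constructor
      · rintro ⟨h1, h2⟩; exact ⟨by linarith, by linarith⟩
      · rintro ⟨h1, h2⟩; exact ⟨by linarith, by linarith⟩
    rw [← hpre, ← lint_neg (fun s => ENNReal.ofReal (|s| ^ r)) (Icc 0 X)]
    simp
  have hIccIoc : ∫⁻ s in Icc 0 X, ENNReal.ofReal (|s| ^ r)
      = ∫⁻ s in Ioc 0 X, ENNReal.ofReal (|s| ^ r) :=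
    (setLIntegral_congr (Ioc_ae_eq_Icc (μ := volume) (a := 0) (b := X))).symm
  have hsplit : Icc (-X) X = Icc (-X) 0 ∪ Ioc 0 X :=
    (Icc_union_Ioc_eq_Icc (by linarith) hX.le).symm
  rw [hsplit]
  calc ∫⁻ s in Icc (-X) 0 ∪ Ioc 0 X, ENNReal.ofReal (|s| ^ r)
      ≤ (∫⁻ s in Icc (-X) 0, ENNReal.ofReal (|s| ^ r))
        + ∫⁻ s in Ioc 0 X, ENNReal.ofReal (|s| ^ r) := lintegral_union_le _ _ _
    _ = 2 * ENNReal.ofReal (X ^ (r + 1) / (r + 1)) := by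
        rw [hneg, hIccIoc, hpos, two_mul]
    _ = ENNReal.ofReal (2 * (X ^ (r + 1) / (r + 1))) := by
        rw [ENNReal.ofReal_mul (by norm_num)]
        simp

lemma Lh {r X : ℝ} (hr1 : -1 < r) (hr0 : r < 0) (hX : 0 < X) (u : ℝ) :
    ∫⁻ t in Ioc 0 X, ENNReal.ofReal (|t - u| ^ r)
      ≤ ENNReal.ofReal (X ^ (r + 1) + 2 * (X ^ (r + 1) / (r + 1))) := by
  have hpt : ∀ t : ℝ, ENNReal.ofReal (|t - u| ^ r)
      ≤ ENNReal.ofReal (X ^ r)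
        + (Icc (u - X) (u + X)).indicator (fun t => ENNReal.ofReal (|t - u| ^ r)) t := by
    intro t
    by_cases ht : |t - u| ≤ X
    · have htm : t ∈ Icc (u - X) (u + X) := by
        rw [mem_Icc]
        rw [abs_le] at ht
        constructor <;> linarith [ht.1, ht.2]
      rw [indicator_of_mem htm]
      exact le_add_self
    · push_neg at ht
      have : |t - u| ^ r ≤ X ^ r :=
        Real.rpow_le_rpow_of_nonpos hX ht.le hr0.le
      exact le_add_right (ENNReal.ofReal_le_ofReal this)
  calc ∫⁻ t in Ioc 0 X, ENNReal.ofReal (|t - u| ^ r)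
      ≤ ∫⁻ t in Ioc 0 X, (ENNReal.ofReal (X ^ r)
          + (Icc (u - X) (u + X)).indicator (fun t => ENNReal.ofReal (|t - u| ^ r)) t) :=
        lintegral_mono fun t => hpt t
    _ = ENNReal.ofReal (X ^ r) * volume (Ioc 0 X)
        + ∫⁻ t in Ioc 0 X,
            (Icc (u - X) (u + X)).indicator (fun t => ENNReal.ofReal (|t - u| ^ r)) t := by
        rw [lintegral_add_left measurable_const, setLIntegral_const]
    _ ≤ ENNReal.ofReal (X ^ r) * ENNReal.ofReal X
        + ∫⁻ t in Icc (u - X) (u + X), ENNReal.ofReal (|t - u| ^ r) := by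
        refine add_le_add ?_ ?_
        · rw [Real.volume_Ioc, sub_zero]
        · calc ∫⁻ t in Ioc 0 X,
              (Icc (u - X) (u + X)).indicator (fun t => ENNReal.ofReal (|t - u| ^ r)) t
              ≤ ∫⁻ t, (Icc (u - X) (u + X)).indicator
                  (fun t => ENNReal.ofReal (|t - u| ^ r)) t := setLIntegral_le_lintegral _ _
            _ = ∫⁻ t in Icc (u - X) (u + X), ENNReal.ofReal (|t - u| ^ r) :=
                lintegral_indicator measurableSet_Icc _
    _ ≤ ENNReal.ofReal (X ^ r) * ENNReal.ofReal X
        + ENNReal.ofReal (2 * (X ^ (r + 1) / (r + 1))) := by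
        gcongr
        have hpre : (fun x : ℝ => x + u) ⁻¹' (Icc (u - X) (u + X)) = Icc (-X) X := by
          ext x
          simp only [mem_preimage, mem_Icc]
          constructor <;> (rintro ⟨h1, h2⟩; constructor <;> linarith)
        have := lint_shift (fun t => ENNReal.ofReal (|t - u| ^ r)) u (Icc (u - X) (u + X))
        rw [hpre] at this
        rw [← this]
        have heq : ∀ t : ℝ, ENNReal.ofReal (|t + u - u| ^ r) = ENNReal.ofReal (|t| ^ r) := by
          intro t; rw [add_sub_cancel_right]
        calc ∫⁻ t in Icc (-X) X, ENNReal.ofReal (|t + u - u| ^ r)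
            = ∫⁻ t in Icc (-X) X, ENNReal.ofReal (|t| ^ r) := by
              exact setLIntegral_congr_fun measurableSet_Icc
                (fun t _ => heq t)
          _ ≤ ENNReal.ofReal (2 * (X ^ (r + 1) / (r + 1))) := Lsym hr1 hr0 hX
    _ = ENNReal.ofReal (X ^ (r + 1) + 2 * (X ^ (r + 1) / (r + 1))) := by
        rw [← ENNReal.ofReal_mul (by positivity),
          ← ENNReal.ofReal_add (by positivity)
            (mul_nonneg (by norm_num) (div_nonneg (by positivity) (by linarith)))]
        congr 2
        rw [Real.rpow_add_one hX.ne' r]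

lemma Lhsq {r X : ℝ} (hr1 : -1 < r) (hr2 : r < -(1/2)) (hX : 0 < X) :
    ∫⁻ u : ℝ, (∫⁻ t in Ioc 0 X, ENNReal.ofReal (|t - u| ^ r)) ^ 2 < ⊤ := by
  have hr0 : r < 0 := by linarith
  set Mb : ℝ := X ^ (r + 1) + 2 * (X ^ (r + 1) / (r + 1)) with hMb
  set C : ℝ := (X * 2 ^ (-r)) ^ 2 with hC
  have hCnn : 0 ≤ C := sq_nonneg _
  -- tail bound
  have htail : ∀ u : ℝ, u ∉ Icc (-(2 * X)) (2 * X) →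
      ∫⁻ t in Ioc 0 X, ENNReal.ofReal (|t - u| ^ r)
        ≤ ENNReal.ofReal (X * 2 ^ (-r) * |u| ^ r) := by
    intro u hu
    have h2X : 2 * X < |u| := by
      rw [mem_Icc, not_and_or, not_le, not_le] at hu
      rcases hu with h | h
      · rw [abs_of_neg (by linarith)]; linarith
      · rw [abs_of_pos (by linarith)]; exact h
    have hb : ∀ t ∈ Ioc (0:ℝ) X, ENNReal.ofReal (|t - u| ^ r)
        ≤ ENNReal.ofReal ((|u| / 2) ^ r) := by
      intro t ht
      refine ENNReal.ofReal_le_ofReal ?_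
      refine Real.rpow_le_rpow_of_nonpos (by linarith) ?_ hr0.le
      have h1 : |u| - |t| ≤ |t - u| := by
        have := abs_sub_abs_le_abs_sub u t
        rwa [abs_sub_comm u t] at this
      have h2 : |t| ≤ X := by
        rw [abs_of_pos ht.1]; exact ht.2
      linarith
    calc ∫⁻ t in Ioc 0 X, ENNReal.ofReal (|t - u| ^ r)
        ≤ ∫⁻ _ in Ioc 0 X, ENNReal.ofReal ((|u| / 2) ^ r) :=
          lintegral_mono_ae (ae_restrict_of_forall_mem measurableSet_Ioc hb)
      _ = ENNReal.ofReal ((|u| / 2) ^ r) * volume (Ioc 0 X) := setLIntegral_const _ _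
      _ ≤ ENNReal.ofReal (X * 2 ^ (-r) * |u| ^ r) := by
          rw [Real.volume_Ioc, sub_zero, ← ENNReal.ofReal_mul (by positivity)]
          refine ENNReal.ofReal_le_ofReal (le_of_eq ?_)
          rw [Real.div_rpow (abs_nonneg u) (by norm_num),
            div_eq_mul_inv, ← Real.rpow_neg (by norm_num)]
          ring
  -- pointwise bound for the square
  have hpt : ∀ u : ℝ, (∫⁻ t in Ioc 0 X, ENNReal.ofReal (|t - u| ^ r)) ^ 2
      ≤ (Icc (-(2 * X)) (2 * X)).indicator (fun _ => ENNReal.ofReal Mb ^ 2) u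
        + (Icc (-(2 * X)) (2 * X))ᶜ.indicator
            (fun u => ENNReal.ofReal (C * |u| ^ (2 * r))) u := by
    intro u
    by_cases hu : u ∈ Icc (-(2 * X)) (2 * X)
    · rw [indicator_of_mem hu, indicator_of_notMem (by simp [hu])]
      rw [add_zero]
      exact pow_le_pow_left' (Lh hr1 hr0 hX u) 2
    · rw [indicator_of_notMem hu, indicator_of_mem (by simp [hu]), zero_add]
      calc (∫⁻ t in Ioc 0 X, ENNReal.ofReal (|t - u| ^ r)) ^ 2
          ≤ ENNReal.ofReal (X * 2 ^ (-r) * |u| ^ r) ^ 2 :=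
            pow_le_pow_left' (htail u hu) 2
        _ = ENNReal.ofReal (C * |u| ^ (2 * r)) := by
            rw [← ENNReal.ofReal_pow (by positivity)]
            congr 1
            rw [mul_pow, hC]
            congr 1
            rw [← Real.rpow_natCast (|u| ^ r) 2, ← Real.rpow_mul (abs_nonneg u)]
            norm_num
            rw [mul_comm]
  have h2r : 2 * r < -1 := by linarith
  have h2X : (0:ℝ) < 2 * X := by linarith
  calc ∫⁻ u : ℝ, (∫⁻ t in Ioc 0 X, ENNReal.ofReal (|t - u| ^ r)) ^ 2
      ≤ ∫⁻ u : ℝ, ((Icc (-(2 * X)) (2 * X)).indicator (fun _ => ENNReal.ofReal Mb ^ 2) u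
        + (Icc (-(2 * X)) (2 * X))ᶜ.indicator
            (fun u => ENNReal.ofReal (C * |u| ^ (2 * r))) u) := lintegral_mono hpt
    _ = ENNReal.ofReal Mb ^ 2 * volume (Icc (-(2 * X)) (2 * X))
        + ∫⁻ u in (Icc (-(2 * X)) (2 * X))ᶜ, ENNReal.ofReal (C * |u| ^ (2 * r)) := by
        rw [lintegral_add_left (measurable_const.indicator measurableSet_Icc),
          lintegral_indicator measurableSet_Icc,
          lintegral_indicator measurableSet_Icc.compl, setLIntegral_const]
    _ ≤ ENNReal.ofReal Mb ^ 2 * volume (Icc (-(2 * X)) (2 * X))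
        + ENNReal.ofReal C * ENNReal.ofReal (2 * ((2 * X) ^ (2 * r + 1) / (-(2 * r + 1)))) := by
        gcongr
        simp_rw [ENNReal.ofReal_mul hCnn]
        rw [lintegral_const_mul _ (by fun_prop)]
        gcongr
        exact lint_tail h2r h2X
    _ < ⊤ := by
        refine ENNReal.add_lt_top.mpr ⟨?_, ?_⟩
        · exact ENNReal.mul_lt_top (by simp [ENNReal.pow_lt_top ENNReal.ofReal_lt_top])
            (by rw [Real.volume_Icc]; exact ENNReal.ofReal_lt_top)
        · exact ENNReal.mul_lt_top ENNReal.ofReal_lt_top ENNReal.ofReal_lt_top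

theorem stmt_12 (q1 q2 q3 c1 c2 c3 ν x1 x2 x3 : ℝ)
    (hq1 : 0 < q1) (hq2 : 0 < q2) (hq3 : 0 < q3)
    (hc1 : 0 < c1) (hc2 : 0 < c2) (hc3 : 0 < c3) (hν : 0 < ν)
    (hx1 : 0 < x1) (hx2 : 0 < x2) (hx3 : 0 < x3)
    (hlow : 1 / (2 * q1) + 1 / q2 + 1 / q3 < 1)
    (hup : 1 < 1 / q1 + 1 / q2 + 1 / q3) :
    (∫⁻ u : ℝ × ℝ × ℝ,
      ({u : ℝ × ℝ × ℝ | 0 < u.2.1 ∧ u.2.1 < x2 ∧ 0 < u.2.2 ∧ u.2.2 < x3}.indicator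
        (fun u => ∫⁻ t1 in Set.Ioc (0 : ℝ) x1, ∫⁻ t2 : ℝ, ∫⁻ t3 : ℝ,
          ENNReal.ofReal ((c1 * |t1 - u.1| ^ (q1 / ν) + c2 * |t2| ^ (q2 / ν) +
            c3 * |t3| ^ (q3 / ν)) ^ (-ν))) u) ^ 2) < ⊤ := by
  -- basic facts
  have hq1' : 0 < 1 / (2 * q1) := by positivity
  have hq2i : 0 < 1 / q2 := by positivity
  have hq3i : 0 < 1 / q3 := by positivity
  have hq2gt1 : 1 < q2 := by
    rw [← div_lt_one hq2] at *
    linarith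
  have hq3gt1 : 1 < q3 := by
    rw [← div_lt_one hq3] at *
    linarith
  have h23 : 1 / q2 + 1 / q3 < 1 := by linarith
  set β : ℝ := q1 * (1 - 1 / q2 - 1 / q3) with hβ
  set r : ℝ := -β with hrdef
  have hq1half : q1 * (1 / (2 * q1)) = 1 / 2 := by field_simp
  have hq1one : q1 * (1 / q1) = 1 := by field_simp
  have hβhalf : 1 / 2 < β := by
    have h1 : 1 / (2 * q1) < 1 - 1 / q2 - 1 / q3 := by linarith
    have := mul_lt_mul_of_pos_left h1 hq1
    rw [hq1half] at this
    linarith [this]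
  have hβone : β < 1 := by
    have h1 : 1 - 1 / q2 - 1 / q3 < 1 / q1 := by linarith
    have := mul_lt_mul_of_pos_left h1 hq1
    rw [hq1one] at this
    linarith [this]
  have hr1 : -1 < r := by rw [hrdef]; linarith
  have hr2 : r < -(1 / 2) := by rw [hrdef]; linarith
  have hr0 : r < 0 := by linarith
  -- L2gen hypotheses
  have hp2 : 0 < q2 / ν := by positivity
  have hp3 : 0 < q3 / ν := by positivity
  have hm3 : 1 < ν * (q3 / ν) := by
    rw [show ν * (q3 / ν) = q3 by field_simp]
    exact hq3gt1
  have hinv3 : 1 / (q3 / ν) = ν / q3 := one_div_div _ _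
  have hpos : 0 < ν - 1 / (q3 / ν) := by
    rw [hinv3]
    have := div_lt_self hν hq3gt1
    linarith
  have hm2 : 1 < (ν - 1 / (q3 / ν)) * (q2 / ν) := by
    rw [hinv3, show (ν - ν / q3) * (q2 / ν) = q2 * (1 - 1 / q3) by field_simp]
    have h1 : 1 / q2 < 1 - 1 / q3 := by linarith
    have h2 := mul_lt_mul_of_pos_left h1 hq2
    rw [show q2 * (1 / q2) = 1 by field_simp] at h2
    linarith
  obtain ⟨K23, hK23, hB23⟩ := L2gen hc2 hc3 hp2 hp3 hν hm3 hpos hm2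
  set E : ℝ := 1 / (q2 / ν) - (ν - 1 / (q3 / ν)) with hE
  have hpE : q1 / ν * E = r := by
    rw [hE, hrdef, hβ, one_div_div, one_div_div]
    field_simp
    ring
  set K' : ℝ := K23 * c1 ^ E with hK'
  have hK'pos : 0 < K' := mul_pos hK23 (Real.rpow_pos_of_pos hc1 _)
  set H : ℝ → ℝ≥0∞ := fun u1 => ∫⁻ t in Ioc (0 : ℝ) x1, ENNReal.ofReal (|t - u1| ^ r)
    with hHdef
  have hmeas_r : Measurable fun t : ℝ => ENNReal.ofReal (|t| ^ r) := by fun_prop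
  -- key bound
  have keybound : ∀ u1 : ℝ,
      (∫⁻ t1 in Ioc (0 : ℝ) x1, ∫⁻ t2 : ℝ, ∫⁻ t3 : ℝ,
        ENNReal.ofReal ((c1 * |t1 - u1| ^ (q1 / ν) + c2 * |t2| ^ (q2 / ν) +
          c3 * |t3| ^ (q3 / ν)) ^ (-ν)))
        ≤ ENNReal.ofReal K' * H u1 := by
    intro u1
    have hconst : ENNReal.ofReal K' * H u1
        = ∫⁻ t1 in Ioc (0 : ℝ) x1, ENNReal.ofReal K' * ENNReal.ofReal (|t1 - u1| ^ r) := by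
      rw [hHdef, lintegral_const_mul _ (by fun_prop)]
    rw [hconst]
    have hae : ∀ᵐ t1 ∂(volume.restrict (Ioc (0 : ℝ) x1)), t1 ≠ u1 := by
      refine ae_restrict_of_ae ?_
      rw [ae_iff]
      simp only [ne_eq, not_not, setOf_eq_eq_singleton]
      exact Real.volume_singleton
    refine lintegral_mono_ae (hae.mono fun t1 ht1 => ?_)
    have hb1 : 0 < c1 * |t1 - u1| ^ (q1 / ν) := by
      have : 0 < |t1 - u1| := abs_pos.mpr (sub_ne_zero.mpr ht1)
      positivity
    refine (hB23 _ hb1).trans (le_of_eq ?_)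
    rw [← ENNReal.ofReal_mul hK'pos.le]
    congr 1
    rw [Real.mul_rpow hc1.le (Real.rpow_nonneg (abs_nonneg _) _),
      ← Real.rpow_mul (abs_nonneg _), hpE, hK']
    ring
  -- pointwise bound on the full space
  set T : Set (ℝ × ℝ) := Ioo 0 x2 ×ˢ Ioo 0 x3 with hT
  have hTmeas : MeasurableSet T := measurableSet_Ioo.prod measurableSet_Ioo
  have hpt : ∀ u : ℝ × ℝ × ℝ,
      ({u : ℝ × ℝ × ℝ | 0 < u.2.1 ∧ u.2.1 < x2 ∧ 0 < u.2.2 ∧ u.2.2 < x3}.indicator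
        (fun u => ∫⁻ t1 in Set.Ioc (0 : ℝ) x1, ∫⁻ t2 : ℝ, ∫⁻ t3 : ℝ,
          ENNReal.ofReal ((c1 * |t1 - u.1| ^ (q1 / ν) + c2 * |t2| ^ (q2 / ν) +
            c3 * |t3| ^ (q3 / ν)) ^ (-ν))) u) ^ 2
      ≤ (ENNReal.ofReal K' * H u.1) ^ 2 * T.indicator 1 u.2 := by
    intro u
    by_cases hu : u ∈ {u : ℝ × ℝ × ℝ | 0 < u.2.1 ∧ u.2.1 < x2 ∧ 0 < u.2.2 ∧ u.2.2 < x3}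
    · rw [indicator_of_mem hu]
      have huT : u.2 ∈ T := by
        rw [hT, mem_prod, mem_Ioo, mem_Ioo]
        exact ⟨⟨hu.1, hu.2.1⟩, ⟨hu.2.2.1, hu.2.2.2⟩⟩
      rw [indicator_of_mem huT, Pi.one_apply, mul_one]
      exact pow_le_pow_left' (keybound u.1) 2
    · rw [indicator_of_notMem hu]
      simp
  -- measurability of H
  have hHmeas : Measurable H := by
    refine Measurable.lintegral_prod_right ?_
    fun_prop
  have hfmeas : Measurable fun u1 : ℝ => (ENNReal.ofReal K' * H u1) ^ 2 :=
    ((measurable_const.mul hHmeas).pow_const 2)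
  calc (∫⁻ u : ℝ × ℝ × ℝ,
      ({u : ℝ × ℝ × ℝ | 0 < u.2.1 ∧ u.2.1 < x2 ∧ 0 < u.2.2 ∧ u.2.2 < x3}.indicator
        (fun u => ∫⁻ t1 in Set.Ioc (0 : ℝ) x1, ∫⁻ t2 : ℝ, ∫⁻ t3 : ℝ,
          ENNReal.ofReal ((c1 * |t1 - u.1| ^ (q1 / ν) + c2 * |t2| ^ (q2 / ν) +
            c3 * |t3| ^ (q3 / ν)) ^ (-ν))) u) ^ 2)
      ≤ ∫⁻ u : ℝ × ℝ × ℝ, (ENNReal.ofReal K' * H u.1) ^ 2 * T.indicator 1 u.2 :=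
        lintegral_mono hpt
    _ = (∫⁻ u1 : ℝ, (ENNReal.ofReal K' * H u1) ^ 2) * ∫⁻ v : ℝ × ℝ, T.indicator 1 v := by
        rw [Measure.volume_eq_prod ℝ (ℝ × ℝ)]
        exact lintegral_prod_mul hfmeas.aemeasurable
          ((measurable_one.indicator hTmeas).aemeasurable)
    _ < ⊤ := by
        refine ENNReal.mul_lt_top ?_ ?_
        · calc ∫⁻ u1 : ℝ, (ENNReal.ofReal K' * H u1) ^ 2
              = ∫⁻ u1 : ℝ, ENNReal.ofReal K' ^ 2 * H u1 ^ 2 := by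
                congr 1
                funext u1
                rw [mul_pow]
            _ = ENNReal.ofReal K' ^ 2 * ∫⁻ u1 : ℝ, H u1 ^ 2 := by
                rw [lintegral_const_mul _ (hHmeas.pow_const 2)]
            _ < ⊤ := ENNReal.mul_lt_top
                (ENNReal.pow_lt_top ENNReal.ofReal_lt_top)
                (Lhsq hr1 hr2 hx1)
        · rw [lintegral_indicator_one hTmeas, hT,
            Measure.volume_eq_prod ℝ ℝ, Measure.prod_prod,
            Real.volume_Ioo, Real.volume_Ioo]
          exact ENNReal.mul_lt_top ENNReal.ofReal_lt_top ENNReal.ofReal_lt_top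
end
end

section
/- Assume 1/(2q1) + 1/(2q2) + 1/(2q3) < 1 < 1/(2q1) + 1/q2 + 1/q3. Fix x2, x3 > 0 and define f23(u1,u2,u3) := ∫_0^{x2} ∫_0^{x3} (c1·|u1|^{q1/ν} + c2·|t2−u2|^{q2/ν} + c3·|t3−u3|^{q3/ν})^{−ν} dt2 dt3. Then ∫_{ℝ³} f23(u)² du < ∞, i.e. the Gaussian random field 𝒴₂₃ of the paper is well defined. -/
open MeasureTheory Set ENNReal

noncomputable def Gker (x α u : ℝ) : ℝ≥0∞ :=
  ∫⁻ t in Set.Ioc (0 : ℝ) x, ENNReal.ofReal (|t - u| ^ (-α))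

lemma Gker_meas (x α : ℝ) : Measurable (Gker x α) :=
  Measurable.lintegral_prod_right'
    (f := fun p : ℝ × ℝ => ENNReal.ofReal (|p.2 - p.1| ^ (-α))) (by fun_prop)

lemma ae_ne_vol (a : ℝ) : ∀ᵐ x : ℝ, x ≠ a := by
  have : (volume : Measure ℝ) {a} = 0 := measure_singleton a
  filter_upwards [measure_eq_zero_iff_ae_notMem.mp this] with x hx using hx

/-- translation: `∫_{(m,m+x]} (t-m)^(-α) = ∫_{(0,x]} s^(-α)` -/
lemma trans_Ioc (m x α : ℝ) :
    ∫⁻ t in Set.Ioc m (m + x), ENNReal.ofReal ((t - m) ^ (-α)) =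
      ∫⁻ s in Set.Ioc (0 : ℝ) x, ENNReal.ofReal (s ^ (-α)) := by
  have h := (measurePreserving_add_right volume m).setLIntegral_comp_emb
    (measurableEmbedding_addRight m) (fun t => ENNReal.ofReal ((t - m) ^ (-α)))
    (Set.Ioc 0 x)
  simp only [add_sub_cancel_right, Set.image_add_const_Ioc, zero_add] at h
  rw [add_comm m x, ← h]

/-- reflection: `∫_{(0,m]} (m-t)^(-α) = ∫_{[0,m)} s^(-α)` -/
lemma refl_Ioc (m α : ℝ) :
    ∫⁻ t in Set.Ioc (0 : ℝ) m, ENNReal.ofReal ((m - t) ^ (-α)) =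
      ∫⁻ s in Set.Ico (0 : ℝ) m, ENNReal.ofReal (s ^ (-α)) := by
  have hcomp : (fun t : ℝ => m - t) = (fun s : ℝ => s + m) ∘ Neg.neg := by
    funext t; simp [sub_eq_neg_add, add_comm]
  have hmp : MeasurePreserving (fun t : ℝ => m - t) volume volume := by
    rw [hcomp]
    exact (measurePreserving_add_right volume m).comp (Measure.measurePreserving_neg volume)
  have hemb : MeasurableEmbedding (fun t : ℝ => m - t) := by
    rw [hcomp]
    exact (measurableEmbedding_addRight m).comp (MeasurableEquiv.neg ℝ).measurableEmbedding
  have h := hmp.setLIntegral_comp_emb hemb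
    (fun s => ENNReal.ofReal (s ^ (-α))) (Set.Ioc 0 m)
  have himg : (fun t : ℝ => m - t) '' Set.Ioc 0 m = Set.Ico 0 m := by
    ext s
    simp only [Set.mem_image, Set.mem_Ioc, Set.mem_Ico]
    constructor
    · rintro ⟨t, ⟨ht0, htm⟩, rfl⟩; constructor <;> linarith
    · rintro ⟨h0, hm⟩; exact ⟨m - s, by constructor <;> [linarith; linarith], by ring⟩
  rw [himg] at h
  exact h

lemma I_fin (x α : ℝ) (hx : 0 < x) (hα : α < 1) :
    ∫⁻ t in Set.Ioc (0 : ℝ) x, ENNReal.ofReal (t ^ (-α)) < ⊤ := by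
  have hii : IntervalIntegrable (fun t : ℝ => t ^ (-α)) volume 0 x :=
    intervalIntegral.intervalIntegrable_rpow' (by linarith)
  exact hii.1.lintegral_lt_top

lemma Gker_le_unif (x α : ℝ) (hx : 0 < x) (hα : 0 ≤ α) (u : ℝ) :
    Gker x α u ≤ 2 * ∫⁻ t in Set.Ioc (0 : ℝ) x, ENNReal.ofReal (t ^ (-α)) := by
  set I := ∫⁻ t in Set.Ioc (0 : ℝ) x, ENNReal.ofReal (t ^ (-α)) with hI
  set m' := min u x with hm'
  set m := max u 0 with hm
  have hA : ∫⁻ t in Set.Ioc 0 x ∩ Set.Iic u, ENNReal.ofReal (|t - u| ^ (-α)) ≤ I := by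
    have h1 : ∫⁻ t in Set.Ioc 0 x ∩ Set.Iic u, ENNReal.ofReal (|t - u| ^ (-α)) ≤
        ∫⁻ t in Set.Ioc 0 m', ENNReal.ofReal (|t - u| ^ (-α)) := by
      apply lintegral_mono_set
      rintro t ⟨⟨ht0, htx⟩, htu⟩
      exact ⟨ht0, le_min htu htx⟩
    have h2 : ∫⁻ t in Set.Ioc 0 m', ENNReal.ofReal (|t - u| ^ (-α)) ≤
        ∫⁻ t in Set.Ioc 0 m', ENNReal.ofReal ((m' - t) ^ (-α)) := by
      apply setLIntegral_mono_ae (by fun_prop)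
      filter_upwards [ae_ne_vol m'] with t htne
      rintro ⟨ht0, htm⟩
      have htm2 : t < m' := lt_of_le_of_ne htm htne
      have hpos : 0 < m' - t := by linarith
      have hle : m' - t ≤ u - t := by
        have : m' ≤ u := min_le_left u x
        linarith
      have habs : |t - u| = u - t := by
        rw [abs_sub_comm]; exact abs_of_nonneg (by linarith [min_le_left u x])
      rw [habs]
      exact ENNReal.ofReal_le_ofReal (Real.rpow_le_rpow_of_nonpos hpos hle (by linarith))
    have h3 : ∫⁻ t in Set.Ioc 0 m', ENNReal.ofReal ((m' - t) ^ (-α)) ≤ I := by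
      rw [refl_Ioc]
      have hsub : Set.Ico (0:ℝ) m' ⊆ {0} ∪ Set.Ioc 0 x := by
        rintro s ⟨hs0, hsm⟩
        rcases eq_or_lt_of_le hs0 with h | h
        · exact Or.inl h.symm
        · exact Or.inr ⟨h, le_trans hsm.le (min_le_right u x)⟩
      calc ∫⁻ s in Set.Ico (0:ℝ) m', ENNReal.ofReal (s ^ (-α))
          ≤ ∫⁻ s in ({0} ∪ Set.Ioc 0 x : Set ℝ), ENNReal.ofReal (s ^ (-α)) :=
            lintegral_mono_set hsub
        _ ≤ (∫⁻ s in ({0} : Set ℝ), ENNReal.ofReal (s ^ (-α))) + I :=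
            lintegral_union_le _ _ _
        _ = I := by
            rw [setLIntegral_measure_zero _ _ (measure_singleton 0), zero_add]
    exact le_trans h1 (le_trans h2 h3)
  have hB : ∫⁻ t in Set.Ioc 0 x ∩ Set.Ioi u, ENNReal.ofReal (|t - u| ^ (-α)) ≤ I := by
    have h1 : ∫⁻ t in Set.Ioc 0 x ∩ Set.Ioi u, ENNReal.ofReal (|t - u| ^ (-α)) ≤
        ∫⁻ t in Set.Ioc m (m + x), ENNReal.ofReal (|t - u| ^ (-α)) := by
      apply lintegral_mono_set
      rintro t ⟨⟨ht0, htx⟩, htu⟩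
      exact ⟨max_lt htu ht0, le_trans htx (le_add_of_nonneg_left (le_max_right u 0))⟩
    have h2 : ∫⁻ t in Set.Ioc m (m + x), ENNReal.ofReal (|t - u| ^ (-α)) ≤
        ∫⁻ t in Set.Ioc m (m + x), ENNReal.ofReal ((t - m) ^ (-α)) := by
      apply setLIntegral_mono (by fun_prop)
      rintro t ⟨htm, htmx⟩
      have hum : u ≤ m := le_max_left u 0
      have hpos : 0 < t - m := by linarith
      have hle : t - m ≤ t - u := by linarith
      have habs : |t - u| = t - u := abs_of_nonneg (by linarith)
      rw [habs]
      exact ENNReal.ofReal_le_ofReal (Real.rpow_le_rpow_of_nonpos hpos hle (by linarith))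
    rw [trans_Ioc] at h2
    exact le_trans h1 h2
  have hsplit : Gker x α u ≤
      (∫⁻ t in Set.Ioc 0 x ∩ Set.Iic u, ENNReal.ofReal (|t - u| ^ (-α))) +
      ∫⁻ t in Set.Ioc 0 x ∩ Set.Ioi u, ENNReal.ofReal (|t - u| ^ (-α)) := by
    have hset := (Set.inter_union_compl (Set.Ioc (0:ℝ) x) (Set.Iic u)).symm
    rw [Set.compl_Iic] at hset
    rw [Gker]
    nth_rewrite 1 [hset]
    exact lintegral_union_le _ _ _
  calc Gker x α u ≤ _ := hsplit
    _ ≤ I + I := add_le_add hA hB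
    _ = 2 * I := (two_mul I).symm

lemma Gker_far (x α u : ℝ) (hx : 0 < x) (hα : 0 ≤ α) (hu : 2 * x < |u|) :
    Gker x α u ≤ ENNReal.ofReal (x * (|u| / 2) ^ (-α)) := by
  have hb : ∀ t ∈ Set.Ioc (0:ℝ) x, ENNReal.ofReal (|t - u| ^ (-α)) ≤
      ENNReal.ofReal ((|u| / 2) ^ (-α)) := by
    rintro t ⟨ht0, htx⟩
    have h1 : |u| / 2 ≤ |t - u| := by
      have : |u| - |t| ≤ |t - u| := by
        rw [abs_sub_comm]; exact abs_sub_abs_le_abs_sub u t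
      have habs : |t| = t := abs_of_pos ht0
      have : |u| - t ≤ |t - u| := by rw [habs] at this; exact this
      nlinarith [abs_nonneg u]
    exact ENNReal.ofReal_le_ofReal
      (Real.rpow_le_rpow_of_nonpos (by nlinarith) h1 (by linarith))
  calc Gker x α u ≤ ∫⁻ _ in Set.Ioc (0:ℝ) x, ENNReal.ofReal ((|u| / 2) ^ (-α)) :=
        setLIntegral_mono (by fun_prop) hb
    _ = ENNReal.ofReal ((|u| / 2) ^ (-α)) * volume (Set.Ioc (0:ℝ) x) := setLIntegral_const _ _
    _ = ENNReal.ofReal (x * (|u| / 2) ^ (-α)) := by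
        rw [Real.volume_Ioc, sub_zero, ← ENNReal.ofReal_mul (by positivity), mul_comm]

lemma neg_side (S : Set ℝ) (β : ℝ) :
    ∫⁻ u in Neg.neg '' S, ENNReal.ofReal (|u| ^ (-β)) =
      ∫⁻ u in S, ENNReal.ofReal (|u| ^ (-β)) := by
  have h := (Measure.measurePreserving_neg (volume : Measure ℝ)).setLIntegral_comp_emb
    (MeasurableEquiv.neg ℝ).measurableEmbedding (fun v => ENNReal.ofReal (|v| ^ (-β))) S
  simp only [abs_neg] at h
  exact h.symm

lemma int_near (R β : ℝ) (hR : 0 < R) (hβ : β < 1) :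
    ∫⁻ u in Set.Icc (-R) R, ENNReal.ofReal (|u| ^ (-β)) < ⊤ := by
  have hpos : ∫⁻ u in Set.Ioc (0:ℝ) R, ENNReal.ofReal (|u| ^ (-β)) < ⊤ := by
    have hcong : ∫⁻ u in Set.Ioc (0:ℝ) R, ENNReal.ofReal (|u| ^ (-β)) =
        ∫⁻ u in Set.Ioc (0:ℝ) R, ENNReal.ofReal (u ^ (-β)) := by
      apply setLIntegral_congr_fun measurableSet_Ioc
      intro u hu
      show ENNReal.ofReal (|u| ^ (-β)) = ENNReal.ofReal (u ^ (-β))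
      rw [abs_of_pos hu.1]
    rw [hcong]
    exact I_fin R β hR hβ
  have hsub : Set.Icc (-R) R ⊆ (Neg.neg '' Set.Ioc 0 R) ∪ ({0} ∪ Set.Ioc 0 R) := by
    rintro u ⟨h1, h2⟩
    rcases lt_trichotomy u 0 with h | h | h
    · exact Or.inl ⟨-u, ⟨by linarith, by linarith⟩, by ring⟩
    · exact Or.inr (Or.inl h)
    · exact Or.inr (Or.inr ⟨h, h2⟩)
  calc ∫⁻ u in Set.Icc (-R) R, ENNReal.ofReal (|u| ^ (-β))
      ≤ ∫⁻ u in (Neg.neg '' Set.Ioc 0 R) ∪ ({0} ∪ Set.Ioc 0 R), ENNReal.ofReal (|u| ^ (-β)) :=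
        lintegral_mono_set hsub
    _ ≤ (∫⁻ u in Neg.neg '' Set.Ioc 0 R, ENNReal.ofReal (|u| ^ (-β))) +
        ∫⁻ u in ({0} ∪ Set.Ioc 0 R : Set ℝ), ENNReal.ofReal (|u| ^ (-β)) :=
        lintegral_union_le _ _ _
    _ ≤ (∫⁻ u in Neg.neg '' Set.Ioc 0 R, ENNReal.ofReal (|u| ^ (-β))) +
        ((∫⁻ u in ({0} : Set ℝ), ENNReal.ofReal (|u| ^ (-β))) +
          ∫⁻ u in Set.Ioc (0:ℝ) R, ENNReal.ofReal (|u| ^ (-β))) :=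
        add_le_add le_rfl (lintegral_union_le _ _ _)
    _ < ⊤ := by
        rw [neg_side, setLIntegral_measure_zero _ _ (measure_singleton 0), zero_add]
        exact ENNReal.add_lt_top.mpr ⟨hpos, hpos⟩

lemma int_far (R β : ℝ) (hR : 0 < R) (hβ : 1 < β) :
    ∫⁻ u in (Set.Icc (-R) R)ᶜ, ENNReal.ofReal (|u| ^ (-β)) < ⊤ := by
  have hpos : ∫⁻ u in Set.Ioi R, ENNReal.ofReal (|u| ^ (-β)) < ⊤ := by
    have hcong : ∫⁻ u in Set.Ioi R, ENNReal.ofReal (|u| ^ (-β)) =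
        ∫⁻ u in Set.Ioi R, ENNReal.ofReal (u ^ (-β)) := by
      apply setLIntegral_congr_fun measurableSet_Ioi
      intro u hu
      show ENNReal.ofReal (|u| ^ (-β)) = ENNReal.ofReal (u ^ (-β))
      rw [abs_of_pos (lt_trans hR hu)]
    rw [hcong]
    exact ((integrableOn_Ioi_rpow_iff hR).mpr (by linarith)).lintegral_lt_top
  have hcompl : (Set.Icc (-R) R)ᶜ = Set.Iio (-R) ∪ Set.Ioi R := by
    ext u
    simp only [Set.mem_compl_iff, Set.mem_Icc, not_and_or, not_le, Set.mem_union,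
      Set.mem_Iio, Set.mem_Ioi]
  have himg : Set.Iio (-R) = Neg.neg '' Set.Ioi R := by simp
  rw [hcompl, himg]
  calc ∫⁻ u in (Neg.neg '' Set.Ioi R) ∪ Set.Ioi R, ENNReal.ofReal (|u| ^ (-β))
      ≤ (∫⁻ u in Neg.neg '' Set.Ioi R, ENNReal.ofReal (|u| ^ (-β))) +
        ∫⁻ u in Set.Ioi R, ENNReal.ofReal (|u| ^ (-β)) := lintegral_union_le _ _ _
    _ < ⊤ := by
        rw [neg_side]
        exact ENNReal.add_lt_top.mpr ⟨hpos, hpos⟩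

lemma Gsq_near (x α X : ℝ) (hx : 0 < x) (hα0 : 0 ≤ α) (hα1 : α < 1) :
    ∫⁻ u in Set.Icc (-X) X, (Gker x α u) ^ 2 < ⊤ := by
  set I := ∫⁻ t in Set.Ioc (0 : ℝ) x, ENNReal.ofReal (t ^ (-α)) with hI
  have hIfin : I < ⊤ := I_fin x α hx hα1
  have hb : ∀ u : ℝ, (Gker x α u) ^ 2 ≤ (2 * I) ^ 2 := fun u =>
    pow_le_pow_left' (Gker_le_unif x α hx hα0 u) 2
  calc ∫⁻ u in Set.Icc (-X) X, (Gker x α u) ^ 2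
      ≤ ∫⁻ _ in Set.Icc (-X) X, (2 * I) ^ 2 := setLIntegral_mono (by fun_prop) (fun u _ => hb u)
    _ = (2 * I) ^ 2 * volume (Set.Icc (-X) X) := setLIntegral_const _ _
    _ < ⊤ := by
        apply ENNReal.mul_lt_top
        · exact ENNReal.pow_lt_top (ENNReal.mul_lt_top (by norm_num) hIfin)
        · rw [Real.volume_Icc]; exact ENNReal.ofReal_lt_top

lemma rpow_half_sq (b α : ℝ) (hb : 0 < b) :
    ((b / 2) ^ (-α)) ^ 2 = 2 ^ (2 * α) * b ^ (-(2 * α)) := by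
  have h1 : ((b / 2 : ℝ) ^ (-α)) ^ 2 = (b / 2) ^ (-(2 * α)) := by
    rw [sq, ← Real.rpow_add (by positivity)]
    ring_nf
  rw [h1, Real.div_rpow hb.le (by norm_num : (0:ℝ) ≤ 2),
    Real.rpow_neg (by norm_num : (0:ℝ) ≤ 2), div_inv_eq_mul, mul_comm]

lemma Gsq_far (x α : ℝ) (hx : 0 < x) (hα0 : 0 ≤ α) (hα1 : 1 < 2 * α) :
    ∫⁻ u in (Set.Icc (-(2 * x)) (2 * x))ᶜ, (Gker x α u) ^ 2 < ⊤ := by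
  have hb : ∀ u ∈ (Set.Icc (-(2 * x)) (2 * x))ᶜ, (Gker x α u) ^ 2 ≤
      ENNReal.ofReal (x ^ 2 * 2 ^ (2 * α)) * ENNReal.ofReal (|u| ^ (-(2 * α))) := by
    intro u hu
    have habs : 2 * x < |u| := by
      by_contra h
      exact hu (abs_le.mp (not_lt.mp h))
    have hupos : 0 < |u| := by linarith
    calc (Gker x α u) ^ 2 ≤ (ENNReal.ofReal (x * (|u| / 2) ^ (-α))) ^ 2 :=
          pow_le_pow_left' (Gker_far x α u hx hα0 habs) 2
      _ = ENNReal.ofReal ((x * (|u| / 2) ^ (-α)) ^ 2) :=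
          (ENNReal.ofReal_pow (by positivity) 2).symm
      _ = ENNReal.ofReal (x ^ 2 * 2 ^ (2 * α) * |u| ^ (-(2 * α))) := by
          rw [mul_pow, rpow_half_sq _ _ hupos]; ring_nf
      _ = ENNReal.ofReal (x ^ 2 * 2 ^ (2 * α)) * ENNReal.ofReal (|u| ^ (-(2 * α))) := by
          rw [← ENNReal.ofReal_mul (by positivity)]
  calc ∫⁻ u in (Set.Icc (-(2 * x)) (2 * x))ᶜ, (Gker x α u) ^ 2
      ≤ ∫⁻ u in (Set.Icc (-(2 * x)) (2 * x))ᶜ,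
          ENNReal.ofReal (x ^ 2 * 2 ^ (2 * α)) * ENNReal.ofReal (|u| ^ (-(2 * α))) :=
        setLIntegral_mono (by fun_prop) hb
    _ = ENNReal.ofReal (x ^ 2 * 2 ^ (2 * α)) *
        ∫⁻ u in (Set.Icc (-(2 * x)) (2 * x))ᶜ, ENNReal.ofReal (|u| ^ (-(2 * α))) :=
        lintegral_const_mul'' _ (by fun_prop)
    _ < ⊤ := ENNReal.mul_lt_top ENNReal.ofReal_lt_top (int_far (2 * x) (2 * α) (by linarith) hα1)

lemma kb (q1 q2 q3 c1 c2 c3 ν : ℝ) (hq1 : 0 < q1) (hq2 : 0 < q2) (hq3 : 0 < q3)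
    (hc1 : 0 < c1) (hc2 : 0 < c2) (hc3 : 0 < c3) (hν : 0 < ν)
    (θ1 θ2 θ3 : ℝ) (ht1 : 0 < θ1) (ht2 : 0 < θ2) (ht3 : 0 < θ3) (hsum : θ1 + θ2 + θ3 = 1)
    (u1 w2 w3 : ℝ) (h1 : u1 ≠ 0) (h2 : w2 ≠ 0) (h3 : w3 ≠ 0) :
    (c1 * |u1| ^ (q1 / ν) + c2 * |w2| ^ (q2 / ν) + c3 * |w3| ^ (q3 / ν)) ^ (-ν) ≤
      (c1 ^ θ1 * c2 ^ θ2 * c3 ^ θ3) ^ (-ν) *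
        (|u1| ^ (-(q1 * θ1)) * (|w2| ^ (-(q2 * θ2)) * |w3| ^ (-(q3 * θ3)))) := by
  have hu1 : 0 < |u1| := abs_pos.mpr h1
  have hw2 : 0 < |w2| := abs_pos.mpr h2
  have hw3 : 0 < |w3| := abs_pos.mpr h3
  set A := c1 * |u1| ^ (q1 / ν) with hA
  set B := c2 * |w2| ^ (q2 / ν) with hB
  set C := c3 * |w3| ^ (q3 / ν) with hC
  have hApos : 0 < A := by
    have := Real.rpow_pos_of_pos hu1 (q1 / ν); positivity
  have hBpos : 0 < B := by
    have := Real.rpow_pos_of_pos hw2 (q2 / ν); positivity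
  have hCpos : 0 < C := by
    have := Real.rpow_pos_of_pos hw3 (q3 / ν); positivity
  have hP : 0 < A ^ θ1 * B ^ θ2 * C ^ θ3 := by
    have h1 := Real.rpow_pos_of_pos hApos θ1
    have h2 := Real.rpow_pos_of_pos hBpos θ2
    have h3 := Real.rpow_pos_of_pos hCpos θ3
    positivity
  have hgm : A ^ θ1 * B ^ θ2 * C ^ θ3 ≤ θ1 * A + θ2 * B + θ3 * C :=
    Real.geom_mean_le_arith_mean3_weighted ht1.le ht2.le ht3.le hApos.le hBpos.le hCpos.le hsum
  have hle : θ1 * A + θ2 * B + θ3 * C ≤ A + B + C := by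
    nlinarith [mul_nonneg (by linarith : (0:ℝ) ≤ 1 - θ1) hApos.le,
      mul_nonneg (by linarith : (0:ℝ) ≤ 1 - θ2) hBpos.le,
      mul_nonneg (by linarith : (0:ℝ) ≤ 1 - θ3) hCpos.le]
  have hmain : (A + B + C) ^ (-ν) ≤ (A ^ θ1 * B ^ θ2 * C ^ θ3) ^ (-ν) :=
    Real.rpow_le_rpow_of_nonpos hP (hgm.trans hle) (by linarith)
  have e1 : A ^ θ1 = c1 ^ θ1 * |u1| ^ (q1 / ν * θ1) := by
    rw [hA, Real.mul_rpow hc1.le (Real.rpow_nonneg (abs_nonneg u1) _),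
      ← Real.rpow_mul (abs_nonneg u1)]
  have e2 : B ^ θ2 = c2 ^ θ2 * |w2| ^ (q2 / ν * θ2) := by
    rw [hB, Real.mul_rpow hc2.le (Real.rpow_nonneg (abs_nonneg w2) _),
      ← Real.rpow_mul (abs_nonneg w2)]
  have e3 : C ^ θ3 = c3 ^ θ3 * |w3| ^ (q3 / ν * θ3) := by
    rw [hC, Real.mul_rpow hc3.le (Real.rpow_nonneg (abs_nonneg w3) _),
      ← Real.rpow_mul (abs_nonneg w3)]
  have eprod : A ^ θ1 * B ^ θ2 * C ^ θ3 =
      (c1 ^ θ1 * c2 ^ θ2 * c3 ^ θ3) *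
        (|u1| ^ (q1 / ν * θ1) * (|w2| ^ (q2 / ν * θ2) * |w3| ^ (q3 / ν * θ3))) := by
    rw [e1, e2, e3]; ring
  have hccc : 0 < c1 ^ θ1 * c2 ^ θ2 * c3 ^ θ3 := by
    have h1 := Real.rpow_pos_of_pos hc1 θ1
    have h2 := Real.rpow_pos_of_pos hc2 θ2
    have h3 := Real.rpow_pos_of_pos hc3 θ3
    positivity
  have hx1 : 0 ≤ |u1| ^ (q1 / ν * θ1) := Real.rpow_nonneg (abs_nonneg u1) _
  have hx2 : 0 ≤ |w2| ^ (q2 / ν * θ2) := Real.rpow_nonneg (abs_nonneg w2) _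
  have hx3 : 0 ≤ |w3| ^ (q3 / ν * θ3) := Real.rpow_nonneg (abs_nonneg w3) _
  have efinal : (A ^ θ1 * B ^ θ2 * C ^ θ3) ^ (-ν) =
      (c1 ^ θ1 * c2 ^ θ2 * c3 ^ θ3) ^ (-ν) *
        (|u1| ^ (-(q1 * θ1)) * (|w2| ^ (-(q2 * θ2)) * |w3| ^ (-(q3 * θ3)))) := by
    rw [eprod, Real.mul_rpow hccc.le (by positivity),
      Real.mul_rpow hx1 (by positivity), Real.mul_rpow hx2 hx3,
      ← Real.rpow_mul (abs_nonneg u1), ← Real.rpow_mul (abs_nonneg w2),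
      ← Real.rpow_mul (abs_nonneg w3)]
    have g1 : q1 / ν * θ1 * (-ν) = -(q1 * θ1) := by field_simp
    have g2 : q2 / ν * θ2 * (-ν) = -(q2 * θ2) := by field_simp
    have g3 : q3 / ν * θ3 * (-ν) = -(q3 * θ3) := by field_simp
    rw [g1, g2, g3]
  rw [← efinal]
  exact hmain

lemma gb (q1 q2 q3 c1 c2 c3 ν x2 x3 θ1 θ2 θ3 : ℝ)
    (hq1 : 0 < q1) (hq2 : 0 < q2) (hq3 : 0 < q3)
    (hc1 : 0 < c1) (hc2 : 0 < c2) (hc3 : 0 < c3) (hν : 0 < ν)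
    (hθ1 : 0 < θ1) (hθ2 : 0 < θ2) (hθ3 : 0 < θ3) (hsum : θ1 + θ2 + θ3 = 1)
    (u : ℝ × ℝ × ℝ) (hu : u.1 ≠ 0) :
    (∫⁻ t2 in Set.Ioc (0 : ℝ) x2, ∫⁻ t3 in Set.Ioc (0 : ℝ) x3,
      ENNReal.ofReal ((c1 * |u.1| ^ (q1 / ν) + c2 * |t2 - u.2.1| ^ (q2 / ν) +
        c3 * |t3 - u.2.2| ^ (q3 / ν)) ^ (-ν))) ≤
    ENNReal.ofReal ((c1 ^ θ1 * c2 ^ θ2 * c3 ^ θ3) ^ (-ν)) *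
      (ENNReal.ofReal (|u.1| ^ (-(q1 * θ1))) *
        (Gker x2 (q2 * θ2) u.2.1 * Gker x3 (q3 * θ3) u.2.2)) := by
  set D := ENNReal.ofReal ((c1 ^ θ1 * c2 ^ θ2 * c3 ^ θ3) ^ (-ν)) *
    ENNReal.ofReal (|u.1| ^ (-(q1 * θ1))) with hD
  have step1 : ∀ t2 : ℝ, t2 ≠ u.2.1 →
      (∫⁻ t3 in Set.Ioc (0 : ℝ) x3,
        ENNReal.ofReal ((c1 * |u.1| ^ (q1 / ν) + c2 * |t2 - u.2.1| ^ (q2 / ν) +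
          c3 * |t3 - u.2.2| ^ (q3 / ν)) ^ (-ν))) ≤
      (D * Gker x3 (q3 * θ3) u.2.2) * ENNReal.ofReal (|t2 - u.2.1| ^ (-(q2 * θ2))) := by
    intro t2 ht2
    have hw2 : t2 - u.2.1 ≠ 0 := sub_ne_zero.mpr ht2
    have hpt : ∀ᵐ t3 ∂(volume.restrict (Set.Ioc (0 : ℝ) x3)),
        ENNReal.ofReal ((c1 * |u.1| ^ (q1 / ν) + c2 * |t2 - u.2.1| ^ (q2 / ν) +
          c3 * |t3 - u.2.2| ^ (q3 / ν)) ^ (-ν)) ≤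
        (D * ENNReal.ofReal (|t2 - u.2.1| ^ (-(q2 * θ2)))) *
          ENNReal.ofReal (|t3 - u.2.2| ^ (-(q3 * θ3))) := by
      filter_upwards [ae_restrict_of_ae (ae_ne_vol u.2.2)] with t3 ht3
      have hw3 : t3 - u.2.2 ≠ 0 := sub_ne_zero.mpr ht3
      have hkb := kb q1 q2 q3 c1 c2 c3 ν hq1 hq2 hq3 hc1 hc2 hc3 hν
        θ1 θ2 θ3 hθ1 hθ2 hθ3 hsum u.1 (t2 - u.2.1) (t3 - u.2.2) hu hw2 hw3
      calc ENNReal.ofReal ((c1 * |u.1| ^ (q1 / ν) + c2 * |t2 - u.2.1| ^ (q2 / ν) +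
            c3 * |t3 - u.2.2| ^ (q3 / ν)) ^ (-ν))
          ≤ ENNReal.ofReal ((c1 ^ θ1 * c2 ^ θ2 * c3 ^ θ3) ^ (-ν) *
              (|u.1| ^ (-(q1 * θ1)) * (|t2 - u.2.1| ^ (-(q2 * θ2)) *
                |t3 - u.2.2| ^ (-(q3 * θ3))))) := ENNReal.ofReal_le_ofReal hkb
        _ = (D * ENNReal.ofReal (|t2 - u.2.1| ^ (-(q2 * θ2)))) *
              ENNReal.ofReal (|t3 - u.2.2| ^ (-(q3 * θ3))) := by
            rw [ENNReal.ofReal_mul (by positivity), ENNReal.ofReal_mul (by positivity),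
              ENNReal.ofReal_mul (by positivity), hD]
            ring
    calc (∫⁻ t3 in Set.Ioc (0 : ℝ) x3,
          ENNReal.ofReal ((c1 * |u.1| ^ (q1 / ν) + c2 * |t2 - u.2.1| ^ (q2 / ν) +
            c3 * |t3 - u.2.2| ^ (q3 / ν)) ^ (-ν)))
        ≤ ∫⁻ t3 in Set.Ioc (0 : ℝ) x3,
            (D * ENNReal.ofReal (|t2 - u.2.1| ^ (-(q2 * θ2)))) *
              ENNReal.ofReal (|t3 - u.2.2| ^ (-(q3 * θ3))) := lintegral_mono_ae hpt
      _ = (D * ENNReal.ofReal (|t2 - u.2.1| ^ (-(q2 * θ2)))) * Gker x3 (q3 * θ3) u.2.2 := by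
          rw [lintegral_const_mul'' _ (by fun_prop : AEMeasurable
            (fun t3 : ℝ => ENNReal.ofReal (|t3 - u.2.2| ^ (-(q3 * θ3))))
            (volume.restrict (Set.Ioc (0 : ℝ) x3)))]
          rfl
      _ = (D * Gker x3 (q3 * θ3) u.2.2) * ENNReal.ofReal (|t2 - u.2.1| ^ (-(q2 * θ2))) := by
          ring
  calc (∫⁻ t2 in Set.Ioc (0 : ℝ) x2, ∫⁻ t3 in Set.Ioc (0 : ℝ) x3,
        ENNReal.ofReal ((c1 * |u.1| ^ (q1 / ν) + c2 * |t2 - u.2.1| ^ (q2 / ν) +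
          c3 * |t3 - u.2.2| ^ (q3 / ν)) ^ (-ν)))
      ≤ ∫⁻ t2 in Set.Ioc (0 : ℝ) x2,
          (D * Gker x3 (q3 * θ3) u.2.2) * ENNReal.ofReal (|t2 - u.2.1| ^ (-(q2 * θ2))) := by
        apply lintegral_mono_ae
        filter_upwards [ae_restrict_of_ae (ae_ne_vol u.2.1)] with t2 ht2 using step1 t2 ht2
    _ = (D * Gker x3 (q3 * θ3) u.2.2) * Gker x2 (q2 * θ2) u.2.1 := by
        rw [lintegral_const_mul'' _ (by fun_prop : AEMeasurable
          (fun t2 : ℝ => ENNReal.ofReal (|t2 - u.2.1| ^ (-(q2 * θ2))))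
          (volume.restrict (Set.Ioc (0 : ℝ) x2)))]
        rfl
    _ = ENNReal.ofReal ((c1 ^ θ1 * c2 ^ θ2 * c3 ^ θ3) ^ (-ν)) *
        (ENNReal.ofReal (|u.1| ^ (-(q1 * θ1))) *
          (Gker x2 (q2 * θ2) u.2.1 * Gker x3 (q3 * θ3) u.2.2)) := by
        rw [hD]; ring

lemma prod3 (f1 f2 f3 : ℝ → ℝ≥0∞) (hf1 : Measurable f1) (hf2 : Measurable f2)
    (hf3 : Measurable f3) (S1 S2 S3 : Set ℝ) :
    ∫⁻ u : ℝ × ℝ × ℝ in S1 ×ˢ S2 ×ˢ S3, f1 u.1 * (f2 u.2.1 * f3 u.2.2) =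
      (∫⁻ v in S1, f1 v) * ((∫⁻ v in S2, f2 v) * (∫⁻ v in S3, f3 v)) := by
  have hmeas : (volume : Measure (ℝ × ℝ × ℝ)).restrict (S1 ×ˢ S2 ×ˢ S3) =
      ((volume : Measure ℝ).restrict S1).prod
        (((volume : Measure ℝ).restrict S2).prod ((volume : Measure ℝ).restrict S3)) := by
    rw [Measure.prod_restrict, ← Measure.volume_eq_prod, Measure.prod_restrict, ← Measure.volume_eq_prod]
  rw [hmeas]
  rw [lintegral_prod_mul (f := f1) (g := fun p : ℝ × ℝ => f2 p.1 * f3 p.2)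
    hf1.aemeasurable (by fun_prop)]
  rw [lintegral_prod_mul (f := f2) (g := f3) hf2.aemeasurable hf3.aemeasurable]

lemma ae_fst_ne_zero : ∀ᵐ u : ℝ × ℝ × ℝ, u.1 ≠ 0 := by
  rw [ae_iff]
  have hset : {u : ℝ × ℝ × ℝ | ¬u.1 ≠ 0} = ({0} : Set ℝ) ×ˢ (Set.univ : Set (ℝ × ℝ)) := by
    ext ⟨a, b, c⟩; simp [eq_comm]
  rw [hset, Measure.volume_eq_prod, Measure.prod_prod]
  simp

lemma region (q1 q2 q3 c1 c2 c3 ν x2 x3 θ1 θ2 θ3 : ℝ)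
    (hq1 : 0 < q1) (hq2 : 0 < q2) (hq3 : 0 < q3)
    (hc1 : 0 < c1) (hc2 : 0 < c2) (hc3 : 0 < c3) (hν : 0 < ν)
    (hθ1 : 0 < θ1) (hθ2 : 0 < θ2) (hθ3 : 0 < θ3) (hsum : θ1 + θ2 + θ3 = 1)
    (S1 S2 S3 : Set ℝ)
    (h1 : ∫⁻ v in S1, ENNReal.ofReal (|v| ^ (-(2 * (q1 * θ1)))) < ⊤)
    (h2 : ∫⁻ v in S2, (Gker x2 (q2 * θ2) v) ^ 2 < ⊤)
    (h3 : ∫⁻ v in S3, (Gker x3 (q3 * θ3) v) ^ 2 < ⊤) :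
    ∫⁻ u : ℝ × ℝ × ℝ in S1 ×ˢ S2 ×ˢ S3,
      (∫⁻ t2 in Set.Ioc (0 : ℝ) x2, ∫⁻ t3 in Set.Ioc (0 : ℝ) x3,
        ENNReal.ofReal ((c1 * |u.1| ^ (q1 / ν) + c2 * |t2 - u.2.1| ^ (q2 / ν) +
          c3 * |t3 - u.2.2| ^ (q3 / ν)) ^ (-ν))) ^ 2 < ⊤ := by
  set D0 := ENNReal.ofReal ((c1 ^ θ1 * c2 ^ θ2 * c3 ^ θ3) ^ (-ν)) with hD0
  have hbound : ∀ᵐ u : ℝ × ℝ × ℝ ∂(volume.restrict (S1 ×ˢ S2 ×ˢ S3)),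
      (∫⁻ t2 in Set.Ioc (0 : ℝ) x2, ∫⁻ t3 in Set.Ioc (0 : ℝ) x3,
        ENNReal.ofReal ((c1 * |u.1| ^ (q1 / ν) + c2 * |t2 - u.2.1| ^ (q2 / ν) +
          c3 * |t3 - u.2.2| ^ (q3 / ν)) ^ (-ν))) ^ 2 ≤
      D0 ^ 2 * (ENNReal.ofReal (|u.1| ^ (-(2 * (q1 * θ1)))) *
        ((Gker x2 (q2 * θ2) u.2.1) ^ 2 * (Gker x3 (q3 * θ3) u.2.2) ^ 2)) := by
    filter_upwards [ae_restrict_of_ae ae_fst_ne_zero] with u hu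
    have hgb := gb q1 q2 q3 c1 c2 c3 ν x2 x3 θ1 θ2 θ3 hq1 hq2 hq3 hc1 hc2 hc3 hν
      hθ1 hθ2 hθ3 hsum u hu
    have hsq := pow_le_pow_left' hgb 2
    have habs : (ENNReal.ofReal (|u.1| ^ (-(q1 * θ1)))) ^ 2 =
        ENNReal.ofReal (|u.1| ^ (-(2 * (q1 * θ1)))) := by
      rw [← ENNReal.ofReal_pow (by positivity), sq,
        ← Real.rpow_add (abs_pos.mpr hu)]
      ring_nf
    calc (∫⁻ t2 in Set.Ioc (0 : ℝ) x2, ∫⁻ t3 in Set.Ioc (0 : ℝ) x3,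
          ENNReal.ofReal ((c1 * |u.1| ^ (q1 / ν) + c2 * |t2 - u.2.1| ^ (q2 / ν) +
            c3 * |t3 - u.2.2| ^ (q3 / ν)) ^ (-ν))) ^ 2
        ≤ (D0 * (ENNReal.ofReal (|u.1| ^ (-(q1 * θ1))) *
            (Gker x2 (q2 * θ2) u.2.1 * Gker x3 (q3 * θ3) u.2.2))) ^ 2 := hsq
      _ = D0 ^ 2 * ((ENNReal.ofReal (|u.1| ^ (-(q1 * θ1)))) ^ 2 *
            ((Gker x2 (q2 * θ2) u.2.1) ^ 2 * (Gker x3 (q3 * θ3) u.2.2) ^ 2)) := by ring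
      _ = D0 ^ 2 * (ENNReal.ofReal (|u.1| ^ (-(2 * (q1 * θ1)))) *
            ((Gker x2 (q2 * θ2) u.2.1) ^ 2 * (Gker x3 (q3 * θ3) u.2.2) ^ 2)) := by rw [habs]
  calc ∫⁻ u : ℝ × ℝ × ℝ in S1 ×ˢ S2 ×ˢ S3,
        (∫⁻ t2 in Set.Ioc (0 : ℝ) x2, ∫⁻ t3 in Set.Ioc (0 : ℝ) x3,
          ENNReal.ofReal ((c1 * |u.1| ^ (q1 / ν) + c2 * |t2 - u.2.1| ^ (q2 / ν) +
            c3 * |t3 - u.2.2| ^ (q3 / ν)) ^ (-ν))) ^ 2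
      ≤ ∫⁻ u : ℝ × ℝ × ℝ in S1 ×ˢ S2 ×ˢ S3,
          D0 ^ 2 * (ENNReal.ofReal (|u.1| ^ (-(2 * (q1 * θ1)))) *
            ((Gker x2 (q2 * θ2) u.2.1) ^ 2 * (Gker x3 (q3 * θ3) u.2.2) ^ 2)) :=
        lintegral_mono_ae hbound
    _ = D0 ^ 2 * ∫⁻ u : ℝ × ℝ × ℝ in S1 ×ˢ S2 ×ˢ S3,
          ENNReal.ofReal (|u.1| ^ (-(2 * (q1 * θ1)))) *
            ((Gker x2 (q2 * θ2) u.2.1) ^ 2 * (Gker x3 (q3 * θ3) u.2.2) ^ 2) :=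
        lintegral_const_mul' _ _ (by
          simp only [hD0]
          exact ENNReal.pow_ne_top ENNReal.ofReal_ne_top)
    _ = D0 ^ 2 * ((∫⁻ v in S1, ENNReal.ofReal (|v| ^ (-(2 * (q1 * θ1))))) *
          ((∫⁻ v in S2, (Gker x2 (q2 * θ2) v) ^ 2) *
            (∫⁻ v in S3, (Gker x3 (q3 * θ3) v) ^ 2))) :=
        congrArg (fun z => D0 ^ 2 * z)
          (prod3 (fun v => ENNReal.ofReal (|v| ^ (-(2 * (q1 * θ1)))))
            (fun v => (Gker x2 (q2 * θ2) v) ^ 2) (fun v => (Gker x3 (q3 * θ3) v) ^ 2)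
            (by fun_prop) ((Gker_meas x2 (q2 * θ2)).pow_const 2)
            ((Gker_meas x3 (q3 * θ3)).pow_const 2) S1 S2 S3)
    _ < ⊤ := by
        apply ENNReal.mul_lt_top
        · exact ENNReal.pow_lt_top ENNReal.ofReal_lt_top
        · exact ENNReal.mul_lt_top h1 (ENNReal.mul_lt_top h2 h3)

set_option maxHeartbeats 2000000 in
theorem stmt_16 (q1 q2 q3 c1 c2 c3 ν x2 x3 : ℝ)
    (hq1 : 0 < q1) (hq2 : 0 < q2) (hq3 : 0 < q3)
    (hc1 : 0 < c1) (hc2 : 0 < c2) (hc3 : 0 < c3) (hν : 0 < ν)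
    (hx2 : 0 < x2) (hx3 : 0 < x3)
    (hlow : 1 / (2 * q1) + 1 / (2 * q2) + 1 / (2 * q3) < 1)
    (hup : 1 < 1 / (2 * q1) + 1 / q2 + 1 / q3) :
    (∫⁻ u : ℝ × ℝ × ℝ,
      (∫⁻ t2 in Set.Ioc (0 : ℝ) x2, ∫⁻ t3 in Set.Ioc (0 : ℝ) x3,
        ENNReal.ofReal ((c1 * |u.1| ^ (q1 / ν) + c2 * |t2 - u.2.1| ^ (q2 / ν) +
          c3 * |t3 - u.2.2| ^ (q3 / ν)) ^ (-ν))) ^ 2) < ⊤ := by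
  set r1 := 1 / (2 * q1) with hr1def
  set r2 := 1 / (2 * q2) with hr2def
  set r3 := 1 / (2 * q3) with hr3def
  have hr1pos : 0 < r1 := by rw [hr1def]; positivity
  have hr2pos : 0 < r2 := by rw [hr2def]; positivity
  have hr3pos : 0 < r3 := by rw [hr3def]; positivity
  have hr1q : 2 * q1 * r1 = 1 := by rw [hr1def]; field_simp
  have hr2q : 2 * q2 * r2 = 1 := by rw [hr2def]; field_simp
  have hr3q : 2 * q3 * r3 = 1 := by rw [hr3def]; field_simp
  have hupr : 1 < r1 + 2 * r2 + 2 * r3 := by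
    have e2 : 1 / q2 = 2 * r2 := by rw [hr2def]; field_simp
    have e3 : 1 / q3 = 2 * r3 := by rw [hr3def]; field_simp
    rw [e2, e3] at hup; linarith
  have hr1lt1 : r1 < 1 := by linarith
  have hr2lt1 : r2 < 1 := by linarith
  have hr3lt1 : r3 < 1 := by linarith
  -- conversion helpers
  have c1near : ∀ θ : ℝ, θ < r1 → 2 * (q1 * θ) < 1 := by
    intro θ h
    have := mul_lt_mul_of_pos_left h (show (0:ℝ) < 2 * q1 by linarith)
    rw [hr1q] at this; linarith
  have c1far : ∀ θ : ℝ, r1 < θ → 1 < 2 * (q1 * θ) := by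
    intro θ h
    have := mul_lt_mul_of_pos_left h (show (0:ℝ) < 2 * q1 by linarith)
    rw [hr1q] at this; linarith
  have c2near : ∀ θ : ℝ, θ < 2 * r2 → q2 * θ < 1 := by
    intro θ h
    have := mul_lt_mul_of_pos_left h hq2
    nlinarith [hr2q]
  have c2far : ∀ θ : ℝ, r2 < θ → 1 < 2 * (q2 * θ) := by
    intro θ h
    have := mul_lt_mul_of_pos_left h (show (0:ℝ) < 2 * q2 by linarith)
    rw [hr2q] at this; linarith
  have c3near : ∀ θ : ℝ, θ < 2 * r3 → q3 * θ < 1 := by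
    intro θ h
    have := mul_lt_mul_of_pos_left h hq3
    nlinarith [hr3q]
  have c3far : ∀ θ : ℝ, r3 < θ → 1 < 2 * (q3 * θ) := by
    intro θ h
    have := mul_lt_mul_of_pos_left h (show (0:ℝ) < 2 * q3 by linarith)
    rw [hr3q] at this; linarith
  set A1 := Set.Icc (-1 : ℝ) 1 with hA1
  set A2 := Set.Icc (-(2 * x2)) (2 * x2) with hA2
  set A3 := Set.Icc (-(2 * x3)) (2 * x3) with hA3
  -- the 8 regions
  have regTTT : ∫⁻ u : ℝ × ℝ × ℝ in A1 ×ˢ A2 ×ˢ A3,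
      (∫⁻ t2 in Set.Ioc (0 : ℝ) x2, ∫⁻ t3 in Set.Ioc (0 : ℝ) x3,
        ENNReal.ofReal ((c1 * |u.1| ^ (q1 / ν) + c2 * |t2 - u.2.1| ^ (q2 / ν) +
          c3 * |t3 - u.2.2| ^ (q3 / ν)) ^ (-ν))) ^ 2 < ⊤ := by
    set T := r1 + 2 * r2 + 2 * r3 with hT
    have hT0 : 0 < T := by rw [hT]; linarith
    have hT1 : 1 < T := hupr
    refine region q1 q2 q3 c1 c2 c3 ν x2 x3 (r1 / T) (2 * r2 / T) (2 * r3 / T)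
      hq1 hq2 hq3 hc1 hc2 hc3 hν (by positivity) (by positivity) (by positivity)
      (by rw [← add_div, ← add_div, ← hT, div_self (ne_of_gt hT0)])
      A1 A2 A3 ?_ ?_ ?_
    · exact int_near 1 _ one_pos (c1near _ (div_lt_self hr1pos hT1))
    · exact Gsq_near x2 _ (2 * x2) hx2 (mul_pos hq2 (by positivity)).le
        (c2near _ (div_lt_self (by linarith) hT1))
    · exact Gsq_near x3 _ (2 * x3) hx3 (mul_pos hq3 (by positivity)).le
        (c3near _ (div_lt_self (by linarith) hT1))
  have regFFF : ∫⁻ u : ℝ × ℝ × ℝ in A1ᶜ ×ˢ A2ᶜ ×ˢ A3ᶜ,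
      (∫⁻ t2 in Set.Ioc (0 : ℝ) x2, ∫⁻ t3 in Set.Ioc (0 : ℝ) x3,
        ENNReal.ofReal ((c1 * |u.1| ^ (q1 / ν) + c2 * |t2 - u.2.1| ^ (q2 / ν) +
          c3 * |t3 - u.2.2| ^ (q3 / ν)) ^ (-ν))) ^ 2 < ⊤ := by
    set S := r1 + r2 + r3 with hS
    have hS0 : 0 < S := by rw [hS]; linarith
    have hS1 : S < 1 := hlow
    have hgt1 : r1 < r1 / S := by rw [lt_div_iff₀ hS0]; nlinarith
    have hgt2 : r2 < r2 / S := by rw [lt_div_iff₀ hS0]; nlinarith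
    have hgt3 : r3 < r3 / S := by rw [lt_div_iff₀ hS0]; nlinarith
    refine region q1 q2 q3 c1 c2 c3 ν x2 x3 (r1 / S) (r2 / S) (r3 / S)
      hq1 hq2 hq3 hc1 hc2 hc3 hν (by positivity) (by positivity) (by positivity)
      (by rw [← add_div, ← add_div, ← hS, div_self (ne_of_gt hS0)])
      A1ᶜ A2ᶜ A3ᶜ ?_ ?_ ?_
    · exact int_far 1 _ one_pos (c1far _ hgt1)
    · exact Gsq_far x2 _ hx2 (mul_pos hq2 (by positivity)).le (c2far _ hgt2)
    · exact Gsq_far x3 _ hx3 (mul_pos hq3 (by positivity)).le (c3far _ hgt3)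
  have regFTT : ∫⁻ u : ℝ × ℝ × ℝ in A1ᶜ ×ˢ A2 ×ˢ A3,
      (∫⁻ t2 in Set.Ioc (0 : ℝ) x2, ∫⁻ t3 in Set.Ioc (0 : ℝ) x3,
        ENNReal.ofReal ((c1 * |u.1| ^ (q1 / ν) + c2 * |t2 - u.2.1| ^ (q2 / ν) +
          c3 * |t3 - u.2.2| ^ (q3 / ν)) ^ (-ν))) ^ 2 < ⊤ := by
    set e2 := min (2 * r2) ((1 - r1) / 2) / 2 with he2
    set e3 := min (2 * r3) ((1 - r1) / 2) / 2 with he3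
    have he2pos : 0 < e2 := by
      rw [he2]; exact div_pos (lt_min (by linarith) (by linarith)) two_pos
    have he3pos : 0 < e3 := by
      rw [he3]; exact div_pos (lt_min (by linarith) (by linarith)) two_pos
    have he2le : e2 ≤ r2 := by
      have := min_le_left (2 * r2) ((1 - r1) / 2); rw [he2]; linarith
    have he3le : e3 ≤ r3 := by
      have := min_le_left (2 * r3) ((1 - r1) / 2); rw [he3]; linarith
    have he2le' : e2 ≤ (1 - r1) / 4 := by
      have := min_le_right (2 * r2) ((1 - r1) / 2); rw [he2]; linarith
    have he3le' : e3 ≤ (1 - r1) / 4 := by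
      have := min_le_right (2 * r3) ((1 - r1) / 2); rw [he3]; linarith
    have hθ1 : r1 < 1 - e2 - e3 := by linarith
    refine region q1 q2 q3 c1 c2 c3 ν x2 x3 (1 - e2 - e3) e2 e3
      hq1 hq2 hq3 hc1 hc2 hc3 hν (by linarith) he2pos he3pos (by ring)
      A1ᶜ A2 A3 ?_ ?_ ?_
    · exact int_far 1 _ one_pos (c1far _ hθ1)
    · exact Gsq_near x2 _ (2 * x2) hx2 (mul_pos hq2 he2pos).le (c2near _ (by linarith))
    · exact Gsq_near x3 _ (2 * x3) hx3 (mul_pos hq3 he3pos).le (c3near _ (by linarith))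
  have regTFT : ∫⁻ u : ℝ × ℝ × ℝ in A1 ×ˢ A2ᶜ ×ˢ A3,
      (∫⁻ t2 in Set.Ioc (0 : ℝ) x2, ∫⁻ t3 in Set.Ioc (0 : ℝ) x3,
        ENNReal.ofReal ((c1 * |u.1| ^ (q1 / ν) + c2 * |t2 - u.2.1| ^ (q2 / ν) +
          c3 * |t3 - u.2.2| ^ (q3 / ν)) ^ (-ν))) ^ 2 < ⊤ := by
    set e1 := min r1 ((1 - r2) / 2) / 2 with he1
    set e3 := min (2 * r3) ((1 - r2) / 2) / 2 with he3
    have he1pos : 0 < e1 := by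
      rw [he1]; exact div_pos (lt_min (by linarith) (by linarith)) two_pos
    have he3pos : 0 < e3 := by
      rw [he3]; exact div_pos (lt_min (by linarith) (by linarith)) two_pos
    have he1le : e1 ≤ r1 / 2 := by
      have := min_le_left r1 ((1 - r2) / 2); rw [he1]; linarith
    have he3le : e3 ≤ r3 := by
      have := min_le_left (2 * r3) ((1 - r2) / 2); rw [he3]; linarith
    have he1le' : e1 ≤ (1 - r2) / 4 := by
      have := min_le_right r1 ((1 - r2) / 2); rw [he1]; linarith
    have he3le' : e3 ≤ (1 - r2) / 4 := by
      have := min_le_right (2 * r3) ((1 - r2) / 2); rw [he3]; linarith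
    have hθ2 : r2 < 1 - e1 - e3 := by linarith
    refine region q1 q2 q3 c1 c2 c3 ν x2 x3 e1 (1 - e1 - e3) e3
      hq1 hq2 hq3 hc1 hc2 hc3 hν he1pos (by linarith) he3pos (by ring)
      A1 A2ᶜ A3 ?_ ?_ ?_
    · exact int_near 1 _ one_pos (c1near _ (by linarith))
    · exact Gsq_far x2 _ hx2 (mul_pos hq2 (by linarith)).le (c2far _ hθ2)
    · exact Gsq_near x3 _ (2 * x3) hx3 (mul_pos hq3 he3pos).le (c3near _ (by linarith))
  have regTTF : ∫⁻ u : ℝ × ℝ × ℝ in A1 ×ˢ A2 ×ˢ A3ᶜ,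
      (∫⁻ t2 in Set.Ioc (0 : ℝ) x2, ∫⁻ t3 in Set.Ioc (0 : ℝ) x3,
        ENNReal.ofReal ((c1 * |u.1| ^ (q1 / ν) + c2 * |t2 - u.2.1| ^ (q2 / ν) +
          c3 * |t3 - u.2.2| ^ (q3 / ν)) ^ (-ν))) ^ 2 < ⊤ := by
    set e1 := min r1 ((1 - r3) / 2) / 2 with he1
    set e2 := min (2 * r2) ((1 - r3) / 2) / 2 with he2
    have he1pos : 0 < e1 := by
      rw [he1]; exact div_pos (lt_min (by linarith) (by linarith)) two_pos
    have he2pos : 0 < e2 := by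
      rw [he2]; exact div_pos (lt_min (by linarith) (by linarith)) two_pos
    have he1le : e1 ≤ r1 / 2 := by
      have := min_le_left r1 ((1 - r3) / 2); rw [he1]; linarith
    have he2le : e2 ≤ r2 := by
      have := min_le_left (2 * r2) ((1 - r3) / 2); rw [he2]; linarith
    have he1le' : e1 ≤ (1 - r3) / 4 := by
      have := min_le_right r1 ((1 - r3) / 2); rw [he1]; linarith
    have he2le' : e2 ≤ (1 - r3) / 4 := by
      have := min_le_right (2 * r2) ((1 - r3) / 2); rw [he2]; linarith
    have hθ3 : r3 < 1 - e1 - e2 := by linarith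
    refine region q1 q2 q3 c1 c2 c3 ν x2 x3 e1 e2 (1 - e1 - e2)
      hq1 hq2 hq3 hc1 hc2 hc3 hν he1pos he2pos (by linarith) (by ring)
      A1 A2 A3ᶜ ?_ ?_ ?_
    · exact int_near 1 _ one_pos (c1near _ (by linarith))
    · exact Gsq_near x2 _ (2 * x2) hx2 (mul_pos hq2 he2pos).le (c2near _ (by linarith))
    · exact Gsq_far x3 _ hx3 (mul_pos hq3 (by linarith)).le (c3far _ hθ3)
  have regFFT : ∫⁻ u : ℝ × ℝ × ℝ in A1ᶜ ×ˢ A2ᶜ ×ˢ A3,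
      (∫⁻ t2 in Set.Ioc (0 : ℝ) x2, ∫⁻ t3 in Set.Ioc (0 : ℝ) x3,
        ENNReal.ofReal ((c1 * |u.1| ^ (q1 / ν) + c2 * |t2 - u.2.1| ^ (q2 / ν) +
          c3 * |t3 - u.2.2| ^ (q3 / ν)) ^ (-ν))) ^ 2 < ⊤ := by
    set δ := 1 - r1 - r2 with hδ
    have hδ0 : 0 < δ := by rw [hδ]; linarith
    set e3 := min (2 * r3) δ / 2 with he3
    have he3pos : 0 < e3 := by
      rw [he3]; exact div_pos (lt_min (by linarith) hδ0) two_pos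
    have he3le : e3 ≤ r3 := by
      have := min_le_left (2 * r3) δ; rw [he3]; linarith
    have he3le' : e3 ≤ δ / 2 := by
      have := min_le_right (2 * r3) δ; rw [he3]; linarith
    set d := (δ - e3) / 2 with hd
    have hd0 : 0 < d := by rw [hd]; linarith
    refine region q1 q2 q3 c1 c2 c3 ν x2 x3 (r1 + d) (r2 + d) e3
      hq1 hq2 hq3 hc1 hc2 hc3 hν (by linarith) (by linarith) he3pos
      (by rw [hd, hδ]; ring) A1ᶜ A2ᶜ A3 ?_ ?_ ?_
    · exact int_far 1 _ one_pos (c1far _ (by linarith))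
    · exact Gsq_far x2 _ hx2 (mul_pos hq2 (by linarith)).le (c2far _ (by linarith))
    · exact Gsq_near x3 _ (2 * x3) hx3 (mul_pos hq3 he3pos).le (c3near _ (by linarith))
  have regFTF : ∫⁻ u : ℝ × ℝ × ℝ in A1ᶜ ×ˢ A2 ×ˢ A3ᶜ,
      (∫⁻ t2 in Set.Ioc (0 : ℝ) x2, ∫⁻ t3 in Set.Ioc (0 : ℝ) x3,
        ENNReal.ofReal ((c1 * |u.1| ^ (q1 / ν) + c2 * |t2 - u.2.1| ^ (q2 / ν) +
          c3 * |t3 - u.2.2| ^ (q3 / ν)) ^ (-ν))) ^ 2 < ⊤ := by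
    set δ := 1 - r1 - r3 with hδ
    have hδ0 : 0 < δ := by rw [hδ]; linarith
    set e2 := min (2 * r2) δ / 2 with he2
    have he2pos : 0 < e2 := by
      rw [he2]; exact div_pos (lt_min (by linarith) hδ0) two_pos
    have he2le : e2 ≤ r2 := by
      have := min_le_left (2 * r2) δ; rw [he2]; linarith
    have he2le' : e2 ≤ δ / 2 := by
      have := min_le_right (2 * r2) δ; rw [he2]; linarith
    set d := (δ - e2) / 2 with hd
    have hd0 : 0 < d := by rw [hd]; linarith
    refine region q1 q2 q3 c1 c2 c3 ν x2 x3 (r1 + d) e2 (r3 + d)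
      hq1 hq2 hq3 hc1 hc2 hc3 hν (by linarith) he2pos (by linarith)
      (by rw [hd, hδ]; ring) A1ᶜ A2 A3ᶜ ?_ ?_ ?_
    · exact int_far 1 _ one_pos (c1far _ (by linarith))
    · exact Gsq_near x2 _ (2 * x2) hx2 (mul_pos hq2 he2pos).le (c2near _ (by linarith))
    · exact Gsq_far x3 _ hx3 (mul_pos hq3 (by linarith)).le (c3far _ (by linarith))
  have regTFF : ∫⁻ u : ℝ × ℝ × ℝ in A1 ×ˢ A2ᶜ ×ˢ A3ᶜ,
      (∫⁻ t2 in Set.Ioc (0 : ℝ) x2, ∫⁻ t3 in Set.Ioc (0 : ℝ) x3,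
        ENNReal.ofReal ((c1 * |u.1| ^ (q1 / ν) + c2 * |t2 - u.2.1| ^ (q2 / ν) +
          c3 * |t3 - u.2.2| ^ (q3 / ν)) ^ (-ν))) ^ 2 < ⊤ := by
    set δ := 1 - r2 - r3 with hδ
    have hδ0 : 0 < δ := by rw [hδ]; linarith
    set e1 := min r1 δ / 2 with he1
    have he1pos : 0 < e1 := by
      rw [he1]; exact div_pos (lt_min hr1pos hδ0) two_pos
    have he1le : e1 ≤ r1 / 2 := by
      have := min_le_left r1 δ; rw [he1]; linarith
    have he1le' : e1 ≤ δ / 2 := by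
      have := min_le_right r1 δ; rw [he1]; linarith
    set d := (δ - e1) / 2 with hd
    have hd0 : 0 < d := by rw [hd]; linarith
    refine region q1 q2 q3 c1 c2 c3 ν x2 x3 e1 (r2 + d) (r3 + d)
      hq1 hq2 hq3 hc1 hc2 hc3 hν he1pos (by linarith) (by linarith)
      (by rw [hd, hδ]; ring) A1 A2ᶜ A3ᶜ ?_ ?_ ?_
    · exact int_near 1 _ one_pos (c1near _ (by linarith))
    · exact Gsq_far x2 _ hx2 (mul_pos hq2 (by linarith)).le (c2far _ (by linarith))
    · exact Gsq_far x3 _ hx3 (mul_pos hq3 (by linarith)).le (c3far _ (by linarith))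
  -- assemble
  have hfin : ∀ b : Bool × Bool × Bool,
      ∫⁻ u : ℝ × ℝ × ℝ in (cond b.1 A1 A1ᶜ) ×ˢ (cond b.2.1 A2 A2ᶜ) ×ˢ (cond b.2.2 A3 A3ᶜ),
        (∫⁻ t2 in Set.Ioc (0 : ℝ) x2, ∫⁻ t3 in Set.Ioc (0 : ℝ) x3,
          ENNReal.ofReal ((c1 * |u.1| ^ (q1 / ν) + c2 * |t2 - u.2.1| ^ (q2 / ν) +
            c3 * |t3 - u.2.2| ^ (q3 / ν)) ^ (-ν))) ^ 2 < ⊤ := by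
    rintro ⟨b1, b2, b3⟩
    cases b1 <;> cases b2 <;> cases b3
    · exact regFFF
    · exact regFFT
    · exact regFTF
    · exact regFTT
    · exact regTFF
    · exact regTFT
    · exact regTTF
    · exact regTTT
  have cover : (Set.univ : Set (ℝ × ℝ × ℝ)) ⊆ ⋃ b : Bool × Bool × Bool,
      (cond b.1 A1 A1ᶜ) ×ˢ (cond b.2.1 A2 A2ᶜ) ×ˢ (cond b.2.2 A3 A3ᶜ) := by
    intro u _
    rcases em (u.1 ∈ A1) with h1 | h1 <;> rcases em (u.2.1 ∈ A2) with h2 | h2 <;>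
      rcases em (u.2.2 ∈ A3) with h3 | h3
    · exact Set.mem_iUnion.mpr ⟨(true, true, true), h1, h2, h3⟩
    · exact Set.mem_iUnion.mpr ⟨(true, true, false), h1, h2, h3⟩
    · exact Set.mem_iUnion.mpr ⟨(true, false, true), h1, h2, h3⟩
    · exact Set.mem_iUnion.mpr ⟨(true, false, false), h1, h2, h3⟩
    · exact Set.mem_iUnion.mpr ⟨(false, true, true), h1, h2, h3⟩
    · exact Set.mem_iUnion.mpr ⟨(false, true, false), h1, h2, h3⟩
    · exact Set.mem_iUnion.mpr ⟨(false, false, true), h1, h2, h3⟩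
    · exact Set.mem_iUnion.mpr ⟨(false, false, false), h1, h2, h3⟩
  calc (∫⁻ u : ℝ × ℝ × ℝ,
      (∫⁻ t2 in Set.Ioc (0 : ℝ) x2, ∫⁻ t3 in Set.Ioc (0 : ℝ) x3,
        ENNReal.ofReal ((c1 * |u.1| ^ (q1 / ν) + c2 * |t2 - u.2.1| ^ (q2 / ν) +
          c3 * |t3 - u.2.2| ^ (q3 / ν)) ^ (-ν))) ^ 2)
      = ∫⁻ u : ℝ × ℝ × ℝ in Set.univ,
        (∫⁻ t2 in Set.Ioc (0 : ℝ) x2, ∫⁻ t3 in Set.Ioc (0 : ℝ) x3,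
          ENNReal.ofReal ((c1 * |u.1| ^ (q1 / ν) + c2 * |t2 - u.2.1| ^ (q2 / ν) +
            c3 * |t3 - u.2.2| ^ (q3 / ν)) ^ (-ν))) ^ 2 := (setLIntegral_univ _).symm
    _ ≤ ∫⁻ u : ℝ × ℝ × ℝ in ⋃ b : Bool × Bool × Bool,
          (cond b.1 A1 A1ᶜ) ×ˢ (cond b.2.1 A2 A2ᶜ) ×ˢ (cond b.2.2 A3 A3ᶜ),
        (∫⁻ t2 in Set.Ioc (0 : ℝ) x2, ∫⁻ t3 in Set.Ioc (0 : ℝ) x3,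
          ENNReal.ofReal ((c1 * |u.1| ^ (q1 / ν) + c2 * |t2 - u.2.1| ^ (q2 / ν) +
            c3 * |t3 - u.2.2| ^ (q3 / ν)) ^ (-ν))) ^ 2 := lintegral_mono_set cover
    _ ≤ ∑' b : Bool × Bool × Bool, ∫⁻ u : ℝ × ℝ × ℝ in
          (cond b.1 A1 A1ᶜ) ×ˢ (cond b.2.1 A2 A2ᶜ) ×ˢ (cond b.2.2 A3 A3ᶜ),
        (∫⁻ t2 in Set.Ioc (0 : ℝ) x2, ∫⁻ t3 in Set.Ioc (0 : ℝ) x3,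
          ENNReal.ofReal ((c1 * |u.1| ^ (q1 / ν) + c2 * |t2 - u.2.1| ^ (q2 / ν) +
            c3 * |t3 - u.2.2| ^ (q3 / ν)) ^ (-ν))) ^ 2 := lintegral_iUnion_le _ _
    _ < ⊤ := by
        rw [tsum_fintype]
        exact ENNReal.sum_lt_top.mpr (fun b _ => hfin b)
end

section
/- Assume 1/(2q1) + 1/(2q2) + 1/(2q3) < 1 < Q. Fix x1, x2, x3 > 0 and define f0(u1,u2,u3) := ∫_0^{x1} ∫_0^{x2} ∫_0^{x3} (c1·|t1−u1|^{q1/ν} + c2·|t2−u2|^{q2/ν} + c3·|t3−u3|^{q3/ν})^{−ν} dt1 dt2 dt3. Then ∫_{ℝ³} f0(u)² du < ∞, i.e. the well-balanced Gaussian random field 𝒴₀ of the paper is well defined. -/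
open MeasureTheory Set ENNReal NNReal

namespace Stmt17



/-- finiteness of the model integral near zero -/
lemma J_lt_top {p x : ℝ} (hp0 : 0 < p) (hp1 : p < 1) (hx : 0 < x) :
    ∫⁻ s in Ioc (0:ℝ) x, (ENNReal.ofReal s) ^ (-p) < ⊤ := by
  have hInt : IntegrableOn (fun s : ℝ => s ^ (-p)) (Ioc 0 x) := by
    have := (intervalIntegral.integrableOn_Ioo_rpow_iff hx).mpr (by linarith : (-1:ℝ) < -p)
    exact this.congr_set_ae Ioo_ae_eq_Ioc.symm
  have h1 : ∫⁻ s in Ioc (0:ℝ) x, (ENNReal.ofReal s) ^ (-p)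
      = ∫⁻ s in Ioc (0:ℝ) x, ENNReal.ofReal (s ^ (-p)) := by
    refine setLIntegral_congr_fun measurableSet_Ioc ?_
    intro s hs
    dsimp only
    rw [← ENNReal.ofReal_rpow_of_pos hs.1]
  rw [h1]
  exact hInt.lintegral_lt_top

/-- finiteness of the model tail integral -/
lemma T_lt_top {p x : ℝ} (hp : 1 < p) (hx : 0 < x) :
    ∫⁻ s in Ioi x, (ENNReal.ofReal s) ^ (-p) < ⊤ := by
  have hInt : IntegrableOn (fun s : ℝ => s ^ (-p)) (Ioi x) :=
    (integrableOn_Ioi_rpow_iff hx).mpr (by linarith : -p < -1)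
  have h1 : ∫⁻ s in Ioi x, (ENNReal.ofReal s) ^ (-p)
      = ∫⁻ s in Ioi x, ENNReal.ofReal (s ^ (-p)) := by
    refine setLIntegral_congr_fun measurableSet_Ioi ?_
    intro s hs
    dsimp only
    rw [← ENNReal.ofReal_rpow_of_pos (hx.trans hs)]
  rw [h1]
  exact hInt.lintegral_lt_top


lemma ker_meas (p v : ℝ) : Measurable (fun t : ℝ => (ENNReal.ofReal |t - v|) ^ (-p)) :=
  ENNReal.continuous_rpow_const.measurable.comp ((measurable_id.sub_const v).abs.ennreal_ofReal)

lemma shift (ψ : ℝ → ℝ≥0∞) (s : Set ℝ) (v : ℝ) :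
    ∫⁻ t in s, ψ t = ∫⁻ r in (· + v) ⁻¹' s, ψ (r + v) :=
  ((measurePreserving_add_right volume v).setLIntegral_comp_preimage_emb
    (measurableEmbedding_addRight v) ψ s).symm

lemma refl (ψ : ℝ → ℝ≥0∞) (s : Set ℝ) :
    ∫⁻ t in s, ψ t = ∫⁻ r in Neg.neg ⁻¹' s, ψ (-r) :=
  ((Measure.measurePreserving_neg volume).setLIntegral_comp_preimage_emb
    measurableEmbedding_neg ψ s).symm

lemma rpow_neg_antitone {a b : ℝ≥0∞} (h : a ≤ b) {p : ℝ} (hp : 0 ≤ p) :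
    b ^ (-p) ≤ a ^ (-p) := by
  rw [ENNReal.rpow_neg, ENNReal.rpow_neg]
  exact ENNReal.inv_le_inv.mpr (ENNReal.rpow_le_rpow h hp)

lemma sq_rpow (a : ℝ≥0∞) (p : ℝ) : (a ^ (-p)) ^ 2 = a ^ (-(2 * p)) := by
  rw [← ENNReal.rpow_natCast (a ^ (-p)) 2, ← ENNReal.rpow_mul]
  norm_num
  ring_nf

lemma interval_bound {p x : ℝ} (hp : 0 ≤ p) {m : ℝ} (hm : 0 ≤ m) :
    ∫⁻ t in Ioc m (m + x), (ENNReal.ofReal |t|) ^ (-p)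
      ≤ ∫⁻ s in Ioc (0:ℝ) x, (ENNReal.ofReal s) ^ (-p) := by
  rw [shift _ (Ioc m (m + x)) m]
  have hpre : ((· + m) ⁻¹' Ioc m (m + x)) = Ioc 0 x := by
    ext r
    simp only [mem_preimage, mem_Ioc]
    constructor <;> intro h <;> constructor <;> linarith [h.1, h.2]
  rw [hpre]
  refine setLIntegral_mono' measurableSet_Ioc fun r hr => ?_
  refine rpow_neg_antitone ?_ hp
  refine ENNReal.ofReal_le_ofReal ?_
  rw [abs_of_nonneg (by linarith [hr.1] : (0:ℝ) ≤ r + m)]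
  linarith [hr.1]

lemma G_le_two_J {p x : ℝ} (hp : 0 ≤ p) (v : ℝ) :
    (∫⁻ t in Ioc (0:ℝ) x, (ENNReal.ofReal |t - v|) ^ (-p))
      ≤ 2 * ∫⁻ s in Ioc (0:ℝ) x, (ENNReal.ofReal s) ^ (-p) := by
  set φ : ℝ → ℝ≥0∞ := fun s => (ENNReal.ofReal |s|) ^ (-p) with hφ
  have h1 : (∫⁻ t in Ioc (0:ℝ) x, (ENNReal.ofReal |t - v|) ^ (-p))
      = ∫⁻ s in Ioc (-v) (x - v), φ s := by
    rw [shift (fun t => φ (t - v)) (Ioc (0:ℝ) x) v]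
    have hpre : ((· + v) ⁻¹' Ioc (0:ℝ) x) = Ioc (-v) (x - v) := by
      ext r
      simp only [mem_preimage, mem_Ioc]
      constructor <;> intro h <;> constructor <;> linarith [h.1, h.2]
    rw [hpre]
    refine setLIntegral_congr_fun measurableSet_Ioc ?_
    intro r _
    simp
  rw [h1]
  set S := Ioc (-v) (x - v) with hS
  have hsplit : ∫⁻ s in S, φ s
      = (∫⁻ s in S ∩ Ioi 0, φ s) + ∫⁻ s in S \ Ioi 0, φ s :=
    (lintegral_inter_add_diff φ S measurableSet_Ioi).symm
  rw [hsplit, two_mul]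
  have hpos : (∫⁻ s in S ∩ Ioi 0, φ s) ≤ ∫⁻ s in Ioc (0:ℝ) x, (ENNReal.ofReal s) ^ (-p) := by
    set m := max (-v) 0 with hm
    have hsub : S ∩ Ioi 0 ⊆ Ioc m (m + x) := by
      rintro s ⟨hs1, hs2⟩
      rw [hS, mem_Ioc] at hs1
      rw [mem_Ioi] at hs2
      constructor
      · exact max_lt hs1.1 hs2
      · have : -v ≤ m := le_max_left _ _
        linarith [hs1.2]
    calc (∫⁻ s in S ∩ Ioi 0, φ s) ≤ ∫⁻ s in Ioc m (m + x), φ s := lintegral_mono_set hsub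
      _ ≤ _ := interval_bound hp (le_max_right _ _)
  have hneg : (∫⁻ s in S \ Ioi 0, φ s) ≤ ∫⁻ s in Ioc (0:ℝ) x, (ENNReal.ofReal s) ^ (-p) := by
    rw [refl φ (S \ Ioi 0)]
    have heven : ∀ r : ℝ, φ (-r) = φ r := fun r => by rw [hφ]; simp [abs_neg]
    simp only [heven]
    set m := max (v - x) 0 with hm
    have hsub : (Neg.neg ⁻¹' (S \ Ioi 0)) ⊆ Icc m (m + x) := by
      rintro r ⟨hr1, hr2⟩
      rw [hS, mem_Ioc] at hr1
      rw [mem_Ioi, not_lt] at hr2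
      constructor
      · exact max_le (by linarith [hr1.2]) (by linarith)
      · have h1 : v - x ≤ m := le_max_left _ _
        linarith [hr1.1]
    calc (∫⁻ r in Neg.neg ⁻¹' (S \ Ioi 0), φ r) ≤ ∫⁻ r in Icc m (m + x), φ r :=
          lintegral_mono_set hsub
      _ = ∫⁻ r in Ioc m (m + x), φ r := by
          rw [Measure.restrict_congr_set Ioc_ae_eq_Icc.symm]
      _ ≤ _ := interval_bound hp (le_max_right _ _)
  exact add_le_add hpos hneg


lemma oneD {p x : ℝ} (hp2 : 1 / 2 < p) (hp1 : p < 1) (hx : 0 < x) :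
    ∫⁻ v : ℝ, (∫⁻ t in Ioc (0:ℝ) x, (ENNReal.ofReal |t - v|) ^ (-p)) ^ 2 < ⊤ := by
  have hp0 : 0 < p := by linarith
  set J : ℝ≥0∞ := ∫⁻ s in Ioc (0:ℝ) x, (ENNReal.ofReal s) ^ (-p) with hJdef
  have hJ : J < ⊤ := J_lt_top hp0 hp1 hx
  set G : ℝ → ℝ≥0∞ := fun v => ∫⁻ t in Ioc (0:ℝ) x, (ENNReal.ofReal |t - v|) ^ (-p) with hGdef
  have hTail : ∫⁻ s in Ioi x, (ENNReal.ofReal s) ^ (-(2 * p)) < ⊤ :=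
    T_lt_top (by linarith) hx
  have hcover : (univ : Set ℝ) ⊆ Iio (-x) ∪ (Icc (-x) (2 * x) ∪ Ioi (2 * x)) := by
    intro v _
    by_cases h1 : v < -x
    · exact Or.inl h1
    · by_cases h2 : v ≤ 2 * x
      · exact Or.inr (Or.inl ⟨by linarith [not_lt.mp h1], h2⟩)
      · exact Or.inr (Or.inr (by simpa using not_le.mp h2))
  have hsplit : ∫⁻ v : ℝ, G v ^ 2
      ≤ (∫⁻ v in Iio (-x), G v ^ 2) + ((∫⁻ v in Icc (-x) (2 * x), G v ^ 2)
          + ∫⁻ v in Ioi (2 * x), G v ^ 2) := by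
    calc ∫⁻ v : ℝ, G v ^ 2 = ∫⁻ v in (univ : Set ℝ), G v ^ 2 := by rw [setLIntegral_univ]
      _ ≤ ∫⁻ v in Iio (-x) ∪ (Icc (-x) (2 * x) ∪ Ioi (2 * x)), G v ^ 2 :=
          lintegral_mono_set hcover
      _ ≤ (∫⁻ v in Iio (-x), G v ^ 2) + ∫⁻ v in Icc (-x) (2 * x) ∪ Ioi (2 * x), G v ^ 2 :=
          lintegral_union_le _ _ _
      _ ≤ _ := add_le_add_right (lintegral_union_le _ _ _) _
  have hleft : (∫⁻ v in Iio (-x), G v ^ 2) < ⊤ := by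
    have hb : ∀ v ∈ Iio (-x), G v ^ 2
        ≤ (ENNReal.ofReal x) ^ 2 * (ENNReal.ofReal (-v)) ^ (-(2 * p)) := by
      intro v hv
      rw [mem_Iio] at hv
      have hGv : G v ≤ ENNReal.ofReal (-v) ^ (-p) * ENNReal.ofReal x := by
        rw [hGdef]
        calc (∫⁻ t in Ioc (0:ℝ) x, (ENNReal.ofReal |t - v|) ^ (-p))
            ≤ ∫⁻ _ in Ioc (0:ℝ) x, ENNReal.ofReal (-v) ^ (-p) := by
              refine setLIntegral_mono' measurableSet_Ioc fun t ht => ?_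
              refine rpow_neg_antitone (ENNReal.ofReal_le_ofReal ?_) hp0.le
              rw [abs_of_pos (by linarith [ht.1] : (0:ℝ) < t - v)]
              linarith [ht.1]
          _ = ENNReal.ofReal (-v) ^ (-p) * ENNReal.ofReal x := by
              rw [setLIntegral_const, Real.volume_Ioc, sub_zero]
      calc G v ^ 2 ≤ (ENNReal.ofReal (-v) ^ (-p) * ENNReal.ofReal x) ^ 2 := by
            rw [pow_two, pow_two]; exact mul_le_mul' hGv hGv
        _ = (ENNReal.ofReal x) ^ 2 * (ENNReal.ofReal (-v)) ^ (-(2 * p)) := by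
            rw [mul_pow, sq_rpow, mul_comm]
    calc (∫⁻ v in Iio (-x), G v ^ 2)
        ≤ ∫⁻ v in Iio (-x), (ENNReal.ofReal x) ^ 2 * (ENNReal.ofReal (-v)) ^ (-(2 * p)) :=
          setLIntegral_mono' measurableSet_Iio hb
      _ = (ENNReal.ofReal x) ^ 2 * ∫⁻ v in Iio (-x), (ENNReal.ofReal (-v)) ^ (-(2 * p)) := by
          rw [lintegral_const_mul]
          exact ENNReal.continuous_rpow_const.measurable.comp
            (measurable_neg.ennreal_ofReal)
      _ < ⊤ := by
          have hrefl : (∫⁻ v in Iio (-x), (ENNReal.ofReal (-v)) ^ (-(2 * p)))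
              = ∫⁻ s in Ioi x, (ENNReal.ofReal s) ^ (-(2 * p)) := by
            have := refl (fun s => (ENNReal.ofReal s) ^ (-(2 * p))) (Ioi x)
            have hpre : (Neg.neg ⁻¹' (Ioi x)) = Iio (-x) := by
              ext r; simp only [mem_preimage, mem_Ioi, mem_Iio]; constructor <;> intro h <;> linarith
            rw [hpre] at this
            exact this.symm
          rw [hrefl]
          exact ENNReal.mul_lt_top (by simp [ENNReal.pow_lt_top, ENNReal.ofReal_lt_top]) hTail
  have hmid : (∫⁻ v in Icc (-x) (2 * x), G v ^ 2) < ⊤ := by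
    have hb : ∀ v ∈ Icc (-x) (2 * x), G v ^ 2 ≤ (2 * J) ^ 2 := by
      intro v _
      have := G_le_two_J (p := p) (x := x) hp0.le v
      rw [pow_two, pow_two]
      exact mul_le_mul' this this
    calc (∫⁻ v in Icc (-x) (2 * x), G v ^ 2)
        ≤ ∫⁻ _ in Icc (-x) (2 * x), (2 * J) ^ 2 := setLIntegral_mono' measurableSet_Icc hb
      _ = (2 * J) ^ 2 * volume (Icc (-x) (2 * x)) := setLIntegral_const _ _
      _ < ⊤ := by
          refine ENNReal.mul_lt_top ?_ (by simp [Real.volume_Icc])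
          exact ENNReal.pow_lt_top (ENNReal.mul_lt_top (by norm_num) hJ)
  have hright : (∫⁻ v in Ioi (2 * x), G v ^ 2) < ⊤ := by
    have hb : ∀ v ∈ Ioi (2 * x), G v ^ 2
        ≤ (ENNReal.ofReal x) ^ 2 * (ENNReal.ofReal (v - x)) ^ (-(2 * p)) := by
      intro v hv
      rw [mem_Ioi] at hv
      have hGv : G v ≤ ENNReal.ofReal (v - x) ^ (-p) * ENNReal.ofReal x := by
        rw [hGdef]
        calc (∫⁻ t in Ioc (0:ℝ) x, (ENNReal.ofReal |t - v|) ^ (-p))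
            ≤ ∫⁻ _ in Ioc (0:ℝ) x, ENNReal.ofReal (v - x) ^ (-p) := by
              refine setLIntegral_mono' measurableSet_Ioc fun t ht => ?_
              refine rpow_neg_antitone (ENNReal.ofReal_le_ofReal ?_) hp0.le
              rw [abs_of_nonpos (by linarith [ht.2] : t - v ≤ 0)]
              linarith [ht.2]
          _ = ENNReal.ofReal (v - x) ^ (-p) * ENNReal.ofReal x := by
              rw [setLIntegral_const, Real.volume_Ioc, sub_zero]
      calc G v ^ 2 ≤ (ENNReal.ofReal (v - x) ^ (-p) * ENNReal.ofReal x) ^ 2 := by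
            rw [pow_two, pow_two]; exact mul_le_mul' hGv hGv
        _ = (ENNReal.ofReal x) ^ 2 * (ENNReal.ofReal (v - x)) ^ (-(2 * p)) := by
            rw [mul_pow, sq_rpow, mul_comm]
    calc (∫⁻ v in Ioi (2 * x), G v ^ 2)
        ≤ ∫⁻ v in Ioi (2 * x), (ENNReal.ofReal x) ^ 2 * (ENNReal.ofReal (v - x)) ^ (-(2 * p)) :=
          setLIntegral_mono' measurableSet_Ioi hb
      _ = (ENNReal.ofReal x) ^ 2 * ∫⁻ v in Ioi (2 * x), (ENNReal.ofReal (v - x)) ^ (-(2 * p)) := by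
          rw [lintegral_const_mul]
          exact ENNReal.continuous_rpow_const.measurable.comp
            ((measurable_id.sub_const x).ennreal_ofReal)
      _ < ⊤ := by
          have hshift : (∫⁻ v in Ioi (2 * x), (ENNReal.ofReal (v - x)) ^ (-(2 * p)))
              = ∫⁻ s in Ioi x, (ENNReal.ofReal s) ^ (-(2 * p)) := by
            rw [shift (fun v => (ENNReal.ofReal (v - x)) ^ (-(2 * p))) (Ioi (2 * x)) x]
            have hpre : ((· + x) ⁻¹' Ioi (2 * x)) = Ioi x := by
              ext r; simp only [mem_preimage, mem_Ioi]; constructor <;> intro h <;> linarith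
            rw [hpre]
            refine setLIntegral_congr_fun measurableSet_Ioi ?_
            intro r _
            simp
          rw [hshift]
          exact ENNReal.mul_lt_top (by simp [ENNReal.pow_lt_top, ENNReal.ofReal_lt_top]) hTail
  exact lt_of_le_of_lt hsplit
    (ENNReal.add_lt_top.mpr ⟨hleft, ENNReal.add_lt_top.mpr ⟨hmid, hright⟩⟩)


lemma G_meas (p x : ℝ) :
    Measurable (fun v : ℝ => ∫⁻ t in Ioc (0:ℝ) x, (ENNReal.ofReal |t - v|) ^ (-p)) := by
  have h : ∀ v : ℝ, (∫⁻ t in Ioc (0:ℝ) x, (ENNReal.ofReal |t - v|) ^ (-p))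
      = ∫⁻ t, (Ioc (0:ℝ) x).indicator (fun t => (ENNReal.ofReal |t - v|) ^ (-p)) t := fun v =>
    (lintegral_indicator measurableSet_Ioc _).symm
  simp_rw [h]
  apply Measurable.lintegral_prod_right
    (f := fun v t => (Ioc (0:ℝ) x).indicator (fun t => (ENNReal.ofReal |t - v|) ^ (-p)) t)
  have hker : Measurable (fun z : ℝ × ℝ => (ENNReal.ofReal |z.2 - z.1|) ^ (-p)) :=
    ENNReal.continuous_rpow_const.measurable.comp
      ((measurable_snd.sub measurable_fst).abs.ennreal_ofReal)
  have heq : (Function.uncurry fun v t =>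
      (Ioc (0:ℝ) x).indicator (fun t => (ENNReal.ofReal |t - v|) ^ (-p)) t)
      = fun z : ℝ × ℝ => (ENNReal.ofReal |z.2 - z.1|) ^ (-p)
          * (Ioc (0:ℝ) x).indicator 1 z.2 := by
    funext z
    by_cases hz : z.2 ∈ Ioc (0:ℝ) x <;>
      simp [Function.uncurry, Set.indicator_apply, hz]
  rw [heq]
  exact hker.mul ((measurable_one.indicator measurableSet_Ioc).comp measurable_snd)

lemma triple_factor (F1 F2 F3 : ℝ → ℝ≥0∞) (h1 : Measurable F1) (h2 : Measurable F2) (h3 : Measurable F3)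
    (s1 s2 s3 : Set ℝ) :
    (∫⁻ t1 in s1, ∫⁻ t2 in s2, ∫⁻ t3 in s3, F1 t1 * (F2 t2 * F3 t3))
      = (∫⁻ t1 in s1, F1 t1) * ((∫⁻ t2 in s2, F2 t2) * (∫⁻ t3 in s3, F3 t3)) := by
  have step3 : ∀ t1 t2, (∫⁻ t3 in s3, F1 t1 * (F2 t2 * F3 t3))
      = F1 t1 * (F2 t2 * ∫⁻ t3 in s3, F3 t3) := by
    intro t1 t2
    rw [lintegral_const_mul _ (h3.const_mul _), lintegral_const_mul _ h3]
  simp_rw [step3]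
  have step2 : ∀ t1, (∫⁻ t2 in s2, F1 t1 * (F2 t2 * ∫⁻ t3 in s3, F3 t3))
      = F1 t1 * ((∫⁻ t2 in s2, F2 t2) * ∫⁻ t3 in s3, F3 t3) := by
    intro t1
    rw [lintegral_const_mul _ (h2.mul_const _), lintegral_mul_const _ h2]
  simp_rw [step2]
  rw [lintegral_mul_const _ h1]

lemma key {q1 q2 q3 c1 c2 c3 ν θ1 θ2 θ3 : ℝ}
    (hc1 : 0 < c1) (hc2 : 0 < c2) (hc3 : 0 < c3) (hν : 0 < ν)
    (hθ1 : 0 < θ1) (hθ2 : 0 < θ2) (hθ3 : 0 < θ3)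
    (hq1 : 0 < q1) (hq2 : 0 < q2) (hq3 : 0 < q3)
    (hθ : θ1 + θ2 + θ3 = 1)
    {a1 a2 a3 : ℝ} (ha1 : 0 ≤ a1) (ha2 : 0 ≤ a2) (ha3 : 0 ≤ a3) :
    ENNReal.ofReal ((c1 * a1 ^ (q1 / ν) + c2 * a2 ^ (q2 / ν) + c3 * a3 ^ (q3 / ν)) ^ (-ν))
      ≤ (ENNReal.ofReal (c1 ^ (-(θ1 * ν))) * (ENNReal.ofReal a1) ^ (-(θ1 * q1))) *
        ((ENNReal.ofReal (c2 ^ (-(θ2 * ν))) * (ENNReal.ofReal a2) ^ (-(θ2 * q2))) *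
          (ENNReal.ofReal (c3 ^ (-(θ3 * ν))) * (ENNReal.ofReal a3) ^ (-(θ3 * q3)))) := by
  have hν' : ν ≠ 0 := ne_of_gt hν
  -- factors are never zero
  have hfac : ∀ (c θv : ℝ) (a : ℝ) (θq : ℝ), 0 < c → 0 < θq → 0 ≤ a →
      ENNReal.ofReal (c ^ (-θv)) * (ENNReal.ofReal a) ^ (-θq) ≠ 0 := by
    intro c θv a θq hc hθq _
    refine mul_ne_zero ?_ ?_
    · simp only [ne_eq, ENNReal.ofReal_eq_zero, not_le]
      exact Real.rpow_pos_of_pos hc _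
    · rw [ne_eq, ENNReal.rpow_eq_zero_iff]
      push_neg
      constructor
      · intro _; linarith
      · intro h; exact absurd h ENNReal.ofReal_ne_top
  have hfac1 := hfac c1 (θ1 * ν) a1 (θ1 * q1) hc1 (by positivity) ha1
  have hfac2 := hfac c2 (θ2 * ν) a2 (θ2 * q2) hc2 (by positivity) ha2
  have hfac3 := hfac c3 (θ3 * ν) a3 (θ3 * q3) hc3 (by positivity) ha3
  -- if some aᵢ = 0, the RHS is ⊤
  have htop : ∀ (c θv a θq : ℝ), 0 < c → 0 < θq → a = 0 →
      ENNReal.ofReal (c ^ (-θv)) * (ENNReal.ofReal a) ^ (-θq) = ⊤ := by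
    intro c θv a θq hc hθq ha
    rw [ha, ENNReal.ofReal_zero, ENNReal.zero_rpow_of_neg (by linarith), ENNReal.mul_top]
    simp only [ne_eq, ENNReal.ofReal_eq_zero, not_le]
    exact Real.rpow_pos_of_pos hc _
  rcases eq_or_lt_of_le ha1 with h1 | h1
  · refine le_top.trans_eq ?_
    symm
    rw [ENNReal.mul_eq_top]
    exact Or.inr ⟨htop c1 (θ1 * ν) a1 (θ1 * q1) hc1 (by positivity) h1.symm,
      mul_ne_zero hfac2 hfac3⟩
  rcases eq_or_lt_of_le ha2 with h2 | h2
  · refine le_top.trans_eq ?_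
    symm
    rw [ENNReal.mul_eq_top]
    refine Or.inl ⟨hfac1, ?_⟩
    rw [ENNReal.mul_eq_top]
    exact Or.inr ⟨htop c2 (θ2 * ν) a2 (θ2 * q2) hc2 (by positivity) h2.symm, hfac3⟩
  rcases eq_or_lt_of_le ha3 with h3 | h3
  · refine le_top.trans_eq ?_
    symm
    rw [ENNReal.mul_eq_top]
    refine Or.inl ⟨hfac1, ?_⟩
    rw [ENNReal.mul_eq_top]
    exact Or.inl ⟨hfac2, htop c3 (θ3 * ν) a3 (θ3 * q3) hc3 (by positivity) h3.symm⟩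
  · -- main case : all aᵢ > 0
    set b1 := c1 * a1 ^ (q1 / ν) with hb1def
    set b2 := c2 * a2 ^ (q2 / ν) with hb2def
    set b3 := c3 * a3 ^ (q3 / ν) with hb3def
    have hb1 : 0 < b1 := by positivity
    have hb2 : 0 < b2 := by positivity
    have hb3 : 0 < b3 := by positivity
    have hgm : b1 ^ θ1 * b2 ^ θ2 * b3 ^ θ3 ≤ b1 + b2 + b3 := by
      calc b1 ^ θ1 * b2 ^ θ2 * b3 ^ θ3 ≤ θ1 * b1 + θ2 * b2 + θ3 * b3 :=
            Real.geom_mean_le_arith_mean3_weighted hθ1.le hθ2.le hθ3.le hb1.le hb2.le hb3.le hθ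
        _ ≤ b1 + b2 + b3 := by nlinarith [hb1.le, hb2.le, hb3.le]
    have hPpos : 0 < b1 ^ θ1 * b2 ^ θ2 * b3 ^ θ3 := by positivity
    have hmono : (b1 + b2 + b3) ^ (-ν) ≤ (b1 ^ θ1 * b2 ^ θ2 * b3 ^ θ3) ^ (-ν) :=
      Real.rpow_le_rpow_of_nonpos hPpos hgm (by linarith)
    have hexpand : ∀ (c a θ q : ℝ), 0 < c → 0 < a → 0 < θ → 0 < q →
        ((c * a ^ (q / ν)) ^ θ) ^ (-ν) = c ^ (-(θ * ν)) * a ^ (-(θ * q)) := by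
      intro c a θ q hc ha hθ' hq'
      rw [← Real.rpow_mul (by positivity), Real.mul_rpow hc.le (Real.rpow_nonneg ha.le _),
        ← Real.rpow_mul ha.le]
      congr 1
      · congr 1; ring
      · congr 1; field_simp
    have hProd : (b1 ^ θ1 * b2 ^ θ2 * b3 ^ θ3) ^ (-ν)
        = (c1 ^ (-(θ1 * ν)) * a1 ^ (-(θ1 * q1))) *
          ((c2 ^ (-(θ2 * ν)) * a2 ^ (-(θ2 * q2))) * (c3 ^ (-(θ3 * ν)) * a3 ^ (-(θ3 * q3)))) := by
      rw [Real.mul_rpow (by positivity) (by positivity),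
        Real.mul_rpow (by positivity) (by positivity), hb1def, hb2def, hb3def,
        hexpand c1 a1 θ1 q1 hc1 h1 hθ1 hq1, hexpand c2 a2 θ2 q2 hc2 h2 hθ2 hq2,
        hexpand c3 a3 θ3 q3 hc3 h3 hθ3 hq3]
      ring
    calc ENNReal.ofReal ((b1 + b2 + b3) ^ (-ν))
        ≤ ENNReal.ofReal ((c1 ^ (-(θ1 * ν)) * a1 ^ (-(θ1 * q1))) *
          ((c2 ^ (-(θ2 * ν)) * a2 ^ (-(θ2 * q2))) *
            (c3 ^ (-(θ3 * ν)) * a3 ^ (-(θ3 * q3))))) :=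
          ENNReal.ofReal_le_ofReal (hProd ▸ hmono)
      _ = _ := by
          rw [ENNReal.ofReal_mul (by positivity), ENNReal.ofReal_mul (by positivity),
            ENNReal.ofReal_mul (by positivity), ENNReal.ofReal_mul (by positivity),
            ENNReal.ofReal_mul (by positivity), ENNReal.ofReal_rpow_of_pos h1,
            ENNReal.ofReal_rpow_of_pos h2, ENNReal.ofReal_rpow_of_pos h3]

end Stmt17


open MeasureTheory Stmt17 Set

theorem stmt_17 (q1 q2 q3 c1 c2 c3 ν x1 x2 x3 : ℝ)
    (hq1 : 0 < q1) (hq2 : 0 < q2) (hq3 : 0 < q3)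
    (hc1 : 0 < c1) (hc2 : 0 < c2) (hc3 : 0 < c3) (hν : 0 < ν)
    (hx1 : 0 < x1) (hx2 : 0 < x2) (hx3 : 0 < x3)
    (hlow : 1 / (2 * q1) + 1 / (2 * q2) + 1 / (2 * q3) < 1)
    (hup : 1 < 1 / q1 + 1 / q2 + 1 / q3) :
    (∫⁻ u : ℝ × ℝ × ℝ,
      (∫⁻ t1 in Set.Ioc (0 : ℝ) x1, ∫⁻ t2 in Set.Ioc (0 : ℝ) x2, ∫⁻ t3 in Set.Ioc (0 : ℝ) x3,
        ENNReal.ofReal ((c1 * |t1 - u.1| ^ (q1 / ν) + c2 * |t2 - u.2.1| ^ (q2 / ν) +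
          c3 * |t3 - u.2.2| ^ (q3 / ν)) ^ (-ν))) ^ 2) < ⊤ := by
  set Q : ℝ := 1 / q1 + 1 / q2 + 1 / q3 with hQdef
  have hQ0 : 0 < Q := by positivity
  have hQ1 : 1 < Q := hup
  have hQ2 : Q < 2 := by
    have e1 : (1:ℝ) / (2 * q1) = (1 / q1) / 2 := by rw [div_div, mul_comm]
    have e2 : (1:ℝ) / (2 * q2) = (1 / q2) / 2 := by rw [div_div, mul_comm]
    have e3 : (1:ℝ) / (2 * q3) = (1 / q3) / 2 := by rw [div_div, mul_comm]
    rw [e1, e2, e3] at hlow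
    rw [hQdef]; linarith
  set p : ℝ := 1 / Q with hpdef
  have hp0 : 0 < p := by positivity
  have hp2 : 1 / 2 < p := by rw [hpdef]; exact one_div_lt_one_div_of_lt hQ0 hQ2
  have hp1 : p < 1 := by rw [hpdef, div_lt_one hQ0]; linarith
  set θ1 : ℝ := p / q1 with hθ1def
  set θ2 : ℝ := p / q2 with hθ2def
  set θ3 : ℝ := p / q3 with hθ3def
  have hθ1 : 0 < θ1 := div_pos hp0 hq1
  have hθ2 : 0 < θ2 := div_pos hp0 hq2
  have hθ3 : 0 < θ3 := div_pos hp0 hq3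
  have hθsum : θ1 + θ2 + θ3 = 1 := by
    have h : θ1 + θ2 + θ3 = p * Q := by rw [hθ1def, hθ2def, hθ3def, hQdef]; ring
    rw [h, hpdef]
    exact one_div_mul_cancel hQ0.ne'
  have hθq1 : θ1 * q1 = p := div_mul_cancel₀ p hq1.ne'
  have hθq2 : θ2 * q2 = p := div_mul_cancel₀ p hq2.ne'
  have hθq3 : θ3 * q3 = p := div_mul_cancel₀ p hq3.ne'
  set C1 : ℝ≥0∞ := ENNReal.ofReal (c1 ^ (-(θ1 * ν))) with hC1def
  set C2 : ℝ≥0∞ := ENNReal.ofReal (c2 ^ (-(θ2 * ν))) with hC2def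
  set C3 : ℝ≥0∞ := ENNReal.ofReal (c3 ^ (-(θ3 * ν))) with hC3def
  set G1 : ℝ → ℝ≥0∞ := fun v => ∫⁻ t in Ioc (0:ℝ) x1, (ENNReal.ofReal |t - v|) ^ (-p)
    with hG1def
  set G2 : ℝ → ℝ≥0∞ := fun v => ∫⁻ t in Ioc (0:ℝ) x2, (ENNReal.ofReal |t - v|) ^ (-p)
    with hG2def
  set G3 : ℝ → ℝ≥0∞ := fun v => ∫⁻ t in Ioc (0:ℝ) x3, (ENNReal.ofReal |t - v|) ^ (-p)
    with hG3def
  have hGm1 : Measurable G1 := G_meas p x1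
  have hGm2 : Measurable G2 := G_meas p x2
  have hGm3 : Measurable G3 := G_meas p x3
  have hbound : ∀ u : ℝ × ℝ × ℝ,
      (∫⁻ t1 in Set.Ioc (0 : ℝ) x1, ∫⁻ t2 in Set.Ioc (0 : ℝ) x2, ∫⁻ t3 in Set.Ioc (0 : ℝ) x3,
        ENNReal.ofReal ((c1 * |t1 - u.1| ^ (q1 / ν) + c2 * |t2 - u.2.1| ^ (q2 / ν) +
          c3 * |t3 - u.2.2| ^ (q3 / ν)) ^ (-ν)))
        ≤ (C1 * G1 u.1) * ((C2 * G2 u.2.1) * (C3 * G3 u.2.2)) := by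
    intro u
    have hpt : ∀ t1 t2 t3 : ℝ,
        ENNReal.ofReal ((c1 * |t1 - u.1| ^ (q1 / ν) + c2 * |t2 - u.2.1| ^ (q2 / ν) +
          c3 * |t3 - u.2.2| ^ (q3 / ν)) ^ (-ν))
        ≤ (C1 * (ENNReal.ofReal |t1 - u.1|) ^ (-p)) *
            ((C2 * (ENNReal.ofReal |t2 - u.2.1|) ^ (-p)) *
              (C3 * (ENNReal.ofReal |t3 - u.2.2|) ^ (-p))) := by
      intro t1 t2 t3
      have h := key hc1 hc2 hc3 hν hθ1 hθ2 hθ3 hq1 hq2 hq3 hθsum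
        (abs_nonneg (t1 - u.1)) (abs_nonneg (t2 - u.2.1)) (abs_nonneg (t3 - u.2.2))
      rwa [hθq1, hθq2, hθq3] at h
    calc (∫⁻ t1 in Set.Ioc (0 : ℝ) x1, ∫⁻ t2 in Set.Ioc (0 : ℝ) x2,
            ∫⁻ t3 in Set.Ioc (0 : ℝ) x3,
            ENNReal.ofReal ((c1 * |t1 - u.1| ^ (q1 / ν) + c2 * |t2 - u.2.1| ^ (q2 / ν) +
              c3 * |t3 - u.2.2| ^ (q3 / ν)) ^ (-ν)))
        ≤ ∫⁻ t1 in Set.Ioc (0 : ℝ) x1, ∫⁻ t2 in Set.Ioc (0 : ℝ) x2,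
            ∫⁻ t3 in Set.Ioc (0 : ℝ) x3,
            (C1 * (ENNReal.ofReal |t1 - u.1|) ^ (-p)) *
              ((C2 * (ENNReal.ofReal |t2 - u.2.1|) ^ (-p)) *
                (C3 * (ENNReal.ofReal |t3 - u.2.2|) ^ (-p))) :=
          lintegral_mono fun t1 => lintegral_mono fun t2 => lintegral_mono fun t3 =>
            hpt t1 t2 t3
      _ = (C1 * G1 u.1) * ((C2 * G2 u.2.1) * (C3 * G3 u.2.2)) := by
          rw [triple_factor _ _ _ ((ker_meas p u.1).const_mul C1)
            ((ker_meas p u.2.1).const_mul C2) ((ker_meas p u.2.2).const_mul C3)]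
          rw [lintegral_const_mul _ (ker_meas p u.1), lintegral_const_mul _ (ker_meas p u.2.1),
            lintegral_const_mul _ (ker_meas p u.2.2)]
  have hsq : ∀ u : ℝ × ℝ × ℝ,
      (∫⁻ t1 in Set.Ioc (0 : ℝ) x1, ∫⁻ t2 in Set.Ioc (0 : ℝ) x2, ∫⁻ t3 in Set.Ioc (0 : ℝ) x3,
        ENNReal.ofReal ((c1 * |t1 - u.1| ^ (q1 / ν) + c2 * |t2 - u.2.1| ^ (q2 / ν) +
          c3 * |t3 - u.2.2| ^ (q3 / ν)) ^ (-ν))) ^ 2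
        ≤ (fun a => (C1 * G1 a) ^ 2) u.1 *
            ((fun b : ℝ × ℝ => (C2 * G2 b.1) ^ 2 * (C3 * G3 b.2) ^ 2) u.2) := by
    intro u
    calc _ ≤ ((C1 * G1 u.1) * ((C2 * G2 u.2.1) * (C3 * G3 u.2.2))) ^ 2 := by
          rw [pow_two, pow_two]; exact mul_le_mul' (hbound u) (hbound u)
      _ = _ := by simp only [mul_pow]
  have hfmeas : Measurable fun a : ℝ => (C1 * G1 a) ^ 2 :=
    (hGm1.const_mul C1).pow_const 2
  have hgmeas : Measurable fun b : ℝ × ℝ => (C2 * G2 b.1) ^ 2 * (C3 * G3 b.2) ^ 2 :=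
    (((hGm2.const_mul C2).pow_const 2).comp measurable_fst).mul
      (((hGm3.const_mul C3).pow_const 2).comp measurable_snd)
  have hcomp : ∀ (C : ℝ≥0∞) (G : ℝ → ℝ≥0∞) (x : ℝ), C ≠ ⊤ → Measurable G →
      (∫⁻ v : ℝ, (G v) ^ 2) < ⊤ → (∫⁻ v : ℝ, (C * G v) ^ 2) < ⊤ := by
    intro C G x hC hG hfin
    have : (∫⁻ v : ℝ, (C * G v) ^ 2) = C ^ 2 * ∫⁻ v : ℝ, (G v) ^ 2 := by
      simp_rw [mul_pow]
      exact lintegral_const_mul _ (hG.pow_const 2)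
    rw [this]
    exact ENNReal.mul_lt_top (ENNReal.pow_lt_top hC.lt_top) hfin
  have hfin1 : (∫⁻ v : ℝ, (C1 * G1 v) ^ 2) < ⊤ :=
    hcomp C1 G1 x1 ENNReal.ofReal_ne_top hGm1 (oneD hp2 hp1 hx1)
  have hfin2 : (∫⁻ v : ℝ, (C2 * G2 v) ^ 2) < ⊤ :=
    hcomp C2 G2 x2 ENNReal.ofReal_ne_top hGm2 (oneD hp2 hp1 hx2)
  have hfin3 : (∫⁻ v : ℝ, (C3 * G3 v) ^ 2) < ⊤ :=
    hcomp C3 G3 x3 ENNReal.ofReal_ne_top hGm3 (oneD hp2 hp1 hx3)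
  calc (∫⁻ u : ℝ × ℝ × ℝ,
      (∫⁻ t1 in Set.Ioc (0 : ℝ) x1, ∫⁻ t2 in Set.Ioc (0 : ℝ) x2, ∫⁻ t3 in Set.Ioc (0 : ℝ) x3,
        ENNReal.ofReal ((c1 * |t1 - u.1| ^ (q1 / ν) + c2 * |t2 - u.2.1| ^ (q2 / ν) +
          c3 * |t3 - u.2.2| ^ (q3 / ν)) ^ (-ν))) ^ 2)
      ≤ ∫⁻ u : ℝ × ℝ × ℝ, (fun a => (C1 * G1 a) ^ 2) u.1 *
          ((fun b : ℝ × ℝ => (C2 * G2 b.1) ^ 2 * (C3 * G3 b.2) ^ 2) u.2) :=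
        lintegral_mono hsq
    _ = (∫⁻ a : ℝ, (C1 * G1 a) ^ 2) *
        ∫⁻ b : ℝ × ℝ, (C2 * G2 b.1) ^ 2 * (C3 * G3 b.2) ^ 2 := by
        exact lintegral_prod_mul hfmeas.aemeasurable hgmeas.aemeasurable
    _ = (∫⁻ a : ℝ, (C1 * G1 a) ^ 2) *
        ((∫⁻ b : ℝ, (C2 * G2 b) ^ 2) * ∫⁻ b : ℝ, (C3 * G3 b) ^ 2) := by
        congr 1
        exact lintegral_prod_mul ((hGm2.const_mul C2).pow_const 2).aemeasurable
          ((hGm3.const_mul C3).pow_const 2).aemeasurable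
    _ < ⊤ := ENNReal.mul_lt_top hfin1 (ENNReal.mul_lt_top hfin2 hfin3)
end

section
/- Assume 1/(2q1) + 1/q2 + 1/q3 < 1 < Q, and for t ∈ ℝ define θ(t) := ∫_{ℝ^5} [ (c1·|u|^{q1/ν} + c2·|s2|^{q2/ν} + c3·|s3|^{q3/ν})^ν · (c1·|t−u|^{q1/ν} + c2·|w2|^{q2/ν} + c3·|w3|^{q3/ν})^ν ]^{−1} du ds2 ds3 dw2 dw3. Then θ(t) is finite for every t ≠ 0 and satisfies the scaling identity θ(t) = θ(1)·|t|^{1 + 2q1(1/q2 + 1/q3 − 1)} for all t ≠ 0. (This identity implies that the field 𝒴₁ has the covariance structure of a fractional Brownian sheet B_{ℋ₁,1/2,1/2} with ℋ₁ = 3/2 − q1(1 − 1/q2 − 1/q3).) -/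
open MeasureTheory Real Set ENNReal

noncomputable def theta (q1 q2 q3 c1 c2 c3 ν t : ℝ) : ENNReal :=
  ∫⁻ u : ℝ, ∫⁻ s2 : ℝ, ∫⁻ s3 : ℝ, ∫⁻ w2 : ℝ, ∫⁻ w3 : ℝ,
    ENNReal.ofReal
      (((c1 * |u| ^ (q1 / ν) + c2 * |s2| ^ (q2 / ν) + c3 * |s3| ^ (q3 / ν)) ^ ν *
        (c1 * |t - u| ^ (q1 / ν) + c2 * |w2| ^ (q2 / ν) + c3 * |w3| ^ (q3 / ν)) ^ ν)⁻¹)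


lemma lintegral_scale (a : ℝ) (ha : a ≠ 0) (f : ℝ → ℝ≥0∞) (hf : Measurable f) :
    ∫⁻ x, f x = ENNReal.ofReal |a| * ∫⁻ x, f (a * x) := by
  have h1 : ∫⁻ x, f (a * x) = ENNReal.ofReal |a⁻¹| * ∫⁻ x, f x := by
    rw [← lintegral_map hf (measurable_const_mul a), Real.map_volume_mul_left ha,
      lintegral_smul_measure, smul_eq_mul]
  rw [h1, ← mul_assoc, ← ENNReal.ofReal_mul (abs_nonneg a), abs_inv,
    mul_inv_cancel₀ (abs_ne_zero.2 ha), ENNReal.ofReal_one, one_mul]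

lemma lintegral_comp_neg (g : ℝ → ℝ≥0∞) (hg : Measurable g) : ∫⁻ x, g (-x) = ∫⁻ x, g x :=
  (Measure.measurePreserving_neg _).lintegral_comp hg

lemma lintegral_reflect (f : ℝ → ℝ≥0∞) (hf : Measurable f) (hsym : ∀ x, f (-x) = f x)
    (s : Set ℝ) (hs : MeasurableSet s) : ∫⁻ x in (-s : Set ℝ), f x = ∫⁻ x in s, f x := by
  rw [← lintegral_indicator hs.neg, ← lintegral_indicator hs]
  have h : ∀ x, (-s : Set ℝ).indicator f x = s.indicator f (-x) := by
    intro x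
    by_cases h : x ∈ (-s : Set ℝ)
    · rw [indicator_of_mem h, indicator_of_mem (Set.mem_neg.1 h), hsym]
    · rw [indicator_of_notMem h, indicator_of_notMem (fun hc => h (Set.mem_neg.2 hc))]
  simp_rw [h]
  exact lintegral_comp_neg _ (hf.indicator hs)

lemma lintegral_comp_one_sub (f : ℝ → ℝ≥0∞) (hf : Measurable f) :
    ∫⁻ x, f (1 - x) = ∫⁻ x, f x := by
  have h1 : ∀ x : ℝ, f (1 - x) = (fun y => f (1 + y)) (-x) := fun x => by
    simp [sub_eq_add_neg]
  simp_rw [h1]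
  rw [lintegral_comp_neg (fun y => f (1 + y)) (by fun_prop)]
  exact lintegral_add_left_eq_self f 1

lemma lintegral_ofReal_lt_top_of_integrableOn {f : ℝ → ℝ} {s : Set ℝ}
    (h : IntegrableOn f s) : ∫⁻ x in s, ENNReal.ofReal (f x) < ⊤ := by
  refine lt_of_le_of_lt (lintegral_mono fun x => ?_) h.2
  rw [Real.enorm_eq_ofReal_abs]
  exact ENNReal.ofReal_le_ofReal (le_abs_self _)

lemma meas_abs_rpow (b : ℝ) : Measurable fun x : ℝ => ENNReal.ofReal (|x| ^ b) := by fun_prop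

lemma finite_small {b r : ℝ} (hb : -1 < b) (hr : 0 < r) :
    ∫⁻ x in Icc (-r) r, ENNReal.ofReal (|x| ^ b) < ⊤ := by
  have hpos : ∫⁻ x in Icc 0 r, ENNReal.ofReal (|x| ^ b) < ⊤ := by
    have h1 : ∫⁻ x in Icc 0 r, ENNReal.ofReal (|x| ^ b) = ∫⁻ x in Ioc 0 r, ENNReal.ofReal (|x| ^ b) :=
      (setLIntegral_congr (Ioc_ae_eq_Icc (α := ℝ)).symm)
    have h2 : ∫⁻ x in Ioc 0 r, ENNReal.ofReal (|x| ^ b) = ∫⁻ x in Ioc 0 r, ENNReal.ofReal (x ^ b) := by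
      refine setLIntegral_congr_fun measurableSet_Ioc (fun x hx => ?_)
      rw [abs_of_pos hx.1]
    rw [h1, h2]
    have h3 : IntegrableOn (fun x : ℝ => x ^ b) (Ioc 0 r) := by
      have := (intervalIntegral.intervalIntegrable_rpow' hb (a := 0) (b := r))
      rwa [intervalIntegrable_iff, uIoc_of_le hr.le] at this
    exact lintegral_ofReal_lt_top_of_integrableOn h3
  have hneg : ∫⁻ x in Icc (-r) 0, ENNReal.ofReal (|x| ^ b) < ⊤ := by
    have : Icc (-r) (0:ℝ) = -Icc 0 r := by rw [Set.neg_Icc]; norm_num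
    rw [this, lintegral_reflect _ (meas_abs_rpow b) (fun x => by rw [abs_neg]) _ measurableSet_Icc]
    exact hpos
  have hsub : Icc (-r) r ⊆ Icc (-r) 0 ∪ Icc 0 r := by
    rw [Set.Icc_union_Icc_eq_Icc (by linarith) hr.le]
  calc ∫⁻ x in Icc (-r) r, ENNReal.ofReal (|x| ^ b)
      ≤ ∫⁻ x in Icc (-r) 0 ∪ Icc 0 r, ENNReal.ofReal (|x| ^ b) := lintegral_mono_set hsub
    _ ≤ _ + _ := lintegral_union_le _ _ _
    _ < ⊤ := ENNReal.add_lt_top.2 ⟨hneg, hpos⟩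

lemma finite_large {b r : ℝ} (hb : b < -1) (hr : 0 < r) :
    ∫⁻ x in {x : ℝ | r ≤ |x|}, ENNReal.ofReal (|x| ^ b) < ⊤ := by
  have hpos : ∫⁻ x in Ici r, ENNReal.ofReal (|x| ^ b) < ⊤ := by
    have h1 : ∫⁻ x in Ici r, ENNReal.ofReal (|x| ^ b) = ∫⁻ x in Ioi r, ENNReal.ofReal (|x| ^ b) :=
      (setLIntegral_congr (Ioi_ae_eq_Ici (α := ℝ)).symm)
    have h2 : ∫⁻ x in Ioi r, ENNReal.ofReal (|x| ^ b) = ∫⁻ x in Ioi r, ENNReal.ofReal (x ^ b) := by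
      refine setLIntegral_congr_fun measurableSet_Ioi (fun x hx => ?_)
      rw [abs_of_pos (hr.trans hx)]
    rw [h1, h2]
    exact lintegral_ofReal_lt_top_of_integrableOn (integrableOn_Ioi_rpow_of_lt hb hr)
  have hneg : ∫⁻ x in Iic (-r), ENNReal.ofReal (|x| ^ b) < ⊤ := by
    have : Iic (-r) = -Ici r := by rw [Set.neg_Ici]
    rw [this, lintegral_reflect _ (meas_abs_rpow b) (fun x => by rw [abs_neg]) _ measurableSet_Ici]
    exact hpos
  have hsub : {x : ℝ | r ≤ |x|} ⊆ Iic (-r) ∪ Ici r := by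
    intro x hx
    rcases le_abs.1 (mem_setOf.1 hx) with h | h
    · exact Or.inr h
    · exact Or.inl (by simpa [le_neg] using h)
  calc ∫⁻ x in {x : ℝ | r ≤ |x|}, ENNReal.ofReal (|x| ^ b)
      ≤ ∫⁻ x in Iic (-r) ∪ Ici r, ENNReal.ofReal (|x| ^ b) := lintegral_mono_set hsub
    _ ≤ _ + _ := lintegral_union_le _ _ _
    _ < ⊤ := ENNReal.add_lt_top.2 ⟨hneg, hpos⟩

lemma lintegral_ofReal_lt_top_of_integrable {f : ℝ → ℝ} (h : Integrable f) :
    ∫⁻ x, ENNReal.ofReal (f x) < ⊤ := by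
  refine lt_of_le_of_lt (lintegral_mono fun x => ?_) h.2
  rw [Real.enorm_eq_ofReal_abs]
  exact ENNReal.ofReal_le_ofReal (le_abs_self _)

lemma aux1 {p r : ℝ} (hp : 0 < p) (hr : 0 < r) (h1 : 1 < p * r) :
    ∫⁻ s : ℝ, ENNReal.ofReal (((1 + |s| ^ p) ^ r)⁻¹) < ⊤ := by
  have key : ∀ s : ℝ, ((1 + |s| ^ p) ^ r)⁻¹ ≤ 2 ^ (p * r) * (1 + |s|) ^ (-(p * r)) := by
    intro s
    have h0 : (0:ℝ) ≤ |s| := abs_nonneg s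
    have hb : ((1 + |s|) / 2) ^ p ≤ 1 + |s| ^ p := by
      have hmax : (1 + |s|) / 2 ≤ max 1 |s| := by
        rcases le_total |s| 1 with h | h
        · rw [max_eq_left h]; linarith
        · rw [max_eq_right h]; linarith
      have h2 : ((1 + |s|) / 2) ^ p ≤ max 1 |s| ^ p :=
        Real.rpow_le_rpow (by positivity) hmax hp.le
      refine h2.trans ?_
      rcases le_total |s| 1 with h | h
      · rw [max_eq_left h, Real.one_rpow]
        nlinarith [Real.rpow_nonneg h0 p]
      · rw [max_eq_right h]
        linarith
    have hb2 : ((1 + |s|) / 2) ^ (p * r) ≤ (1 + |s| ^ p) ^ r := by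
      rw [Real.rpow_mul (by positivity)]
      exact Real.rpow_le_rpow (by positivity) hb hr.le
    have hpos : (0:ℝ) < ((1 + |s|) / 2) ^ (p * r) := Real.rpow_pos_of_pos (by positivity) _
    have hinv : ((1 + |s| ^ p) ^ r)⁻¹ ≤ (((1 + |s|) / 2) ^ (p * r))⁻¹ :=
      inv_anti₀ hpos hb2
    refine hinv.trans (le_of_eq ?_)
    rw [Real.div_rpow (by positivity) (by norm_num), inv_div, div_eq_mul_inv,
      ← Real.rpow_neg (by positivity)]
  calc ∫⁻ s : ℝ, ENNReal.ofReal (((1 + |s| ^ p) ^ r)⁻¹)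
      ≤ ∫⁻ s : ℝ, ENNReal.ofReal (2 ^ (p * r) * (1 + |s|) ^ (-(p * r))) :=
        lintegral_mono fun s => ENNReal.ofReal_le_ofReal (key s)
    _ < ⊤ := by
        refine lintegral_ofReal_lt_top_of_integrable ?_
        have hnr : (Module.finrank ℝ ℝ : ℝ) < p * r := by
          simpa [Module.finrank_self] using h1
        simpa [Real.norm_eq_abs] using (integrable_one_add_norm (E := ℝ) hnr).const_mul (2 ^ (p*r))

noncomputable def Iint (β t : ℝ) : ℝ≥0∞ := ∫⁻ u : ℝ, ENNReal.ofReal (|u| ^ β * |t - u| ^ β)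

noncomputable def Kf (β u : ℝ) : ℝ≥0∞ := ENNReal.ofReal (|u| ^ β * max (1/2) |u| ^ β)

lemma Kf_meas (β : ℝ) : Measurable (Kf β) := by unfold Kf; fun_prop

lemma Kf_lt_top {β : ℝ} (hb1 : -1 < β) (hb2 : 2 * β < -1) : ∫⁻ u, Kf β u < ⊤ := by
  have hβneg : β < 0 := by linarith
  have hs : MeasurableSet (Icc (-(1/2):ℝ) (1/2)) := measurableSet_Icc
  rw [← lintegral_add_compl (Kf β) hs]
  have h1 : ∫⁻ u in Icc (-(1/2):ℝ) (1/2), Kf β u < ⊤ := by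
    have he : ∀ u ∈ Icc (-(1/2):ℝ) (1/2), Kf β u =
        ENNReal.ofReal (|u| ^ β) * ENNReal.ofReal ((1/2:ℝ) ^ β) := by
      intro u hu
      have habs : |u| ≤ 1/2 := abs_le.2 ⟨hu.1, hu.2⟩
      rw [Kf, max_eq_left habs, ENNReal.ofReal_mul (Real.rpow_nonneg (abs_nonneg _) _)]
    rw [setLIntegral_congr_fun hs he, lintegral_mul_const' _ _ ENNReal.ofReal_ne_top]
    exact ENNReal.mul_lt_top (finite_small hb1 (by norm_num)) ENNReal.ofReal_lt_top
  have h2 : ∫⁻ u in (Icc (-(1/2):ℝ) (1/2))ᶜ, Kf β u < ⊤ := by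
    have he : ∀ u ∈ (Icc (-(1/2):ℝ) (1/2))ᶜ, Kf β u = ENNReal.ofReal (|u| ^ (β + β)) := by
      intro u hu
      have habs : (1/2:ℝ) < |u| := not_le.1 fun h => hu (mem_Icc.2 (abs_le.1 h))
      rw [Kf, max_eq_right habs.le, ← Real.rpow_add (by linarith : (0:ℝ) < |u|)]
    rw [setLIntegral_congr_fun hs.compl he]
    refine lt_of_le_of_lt (lintegral_mono_set ?_) (finite_large (by linarith : β + β < -1) (by norm_num : (0:ℝ) < 1/2))
    intro x hx
    exact mem_setOf.2 (not_le.1 fun h => hx (mem_Icc.2 (abs_le.1 h))).le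
  exact ENNReal.add_lt_top.2 ⟨h1, h2⟩

lemma Iint_one_lt_top {β : ℝ} (hb1 : -1 < β) (hb2 : 2 * β < -1) : Iint β 1 < ⊤ := by
  have hβneg : β ≤ 0 := by linarith
  have hbound : ∀ u : ℝ, ENNReal.ofReal (|u| ^ β * |1 - u| ^ β) ≤ Kf β u + Kf β (1 - u) := by
    intro u
    have key : ∀ v w : ℝ, |v| ≤ |w| → v + w = 1 →
        ENNReal.ofReal (|v| ^ β * |w| ^ β) ≤ Kf β v := by
      intro v w hvw hsum
      have hw2 : (1/2:ℝ) ≤ |w| := by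
        have h1 : (1:ℝ) ≤ |v| + |w| := by
          calc (1:ℝ) = |v + w| := by rw [hsum, abs_one]
          _ ≤ |v| + |w| := abs_add_le _ _
        linarith
      have hmax : max (1/2) |v| ≤ |w| := max_le hw2 hvw
      have h3 : |w| ^ β ≤ max (1/2) |v| ^ β :=
        Real.rpow_le_rpow_of_nonpos (by norm_num [lt_max_iff]) hmax hβneg
      exact ENNReal.ofReal_le_ofReal
        (mul_le_mul_of_nonneg_left h3 (Real.rpow_nonneg (abs_nonneg _) _))
    rcases le_total |u| |1 - u| with h | h
    · exact le_trans (key u (1-u) h (by ring)) le_self_add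
    · refine le_trans (le_trans (le_of_eq (by rw [mul_comm])) (key (1-u) u h (by ring))) le_add_self
  calc Iint β 1 ≤ ∫⁻ u, (Kf β u + Kf β (1 - u)) := lintegral_mono hbound
    _ = (∫⁻ u, Kf β u) + ∫⁻ u, Kf β (1 - u) := lintegral_add_left (Kf_meas β) _
    _ = (∫⁻ u, Kf β u) + ∫⁻ u, Kf β u := by rw [lintegral_comp_one_sub _ (Kf_meas β)]
    _ < ⊤ := ENNReal.add_lt_top.2 ⟨Kf_lt_top hb1 hb2, Kf_lt_top hb1 hb2⟩

lemma Iint_meas (β t : ℝ) : Measurable fun u : ℝ => ENNReal.ofReal (|u| ^ β * |t - u| ^ β) := by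
  fun_prop

lemma Iint_scale {β : ℝ} {t : ℝ} (ht : t ≠ 0) :
    Iint β t = ENNReal.ofReal (|t| ^ (1 + 2 * β)) * Iint β 1 := by
  have habs : (0:ℝ) < |t| := abs_pos.2 ht
  rw [Iint, lintegral_scale t ht _ (Iint_meas β t)]
  have h1 : ∀ u : ℝ, ENNReal.ofReal (|t * u| ^ β * |t - t * u| ^ β) =
      ENNReal.ofReal (|t| ^ β * |t| ^ β) * ENNReal.ofReal (|u| ^ β * |1 - u| ^ β) := by
    intro u
    have e1 : t - t * u = t * (1 - u) := by ring
    rw [e1, abs_mul, abs_mul, Real.mul_rpow (abs_nonneg _) (abs_nonneg _),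
      Real.mul_rpow (abs_nonneg _) (abs_nonneg _), ← ENNReal.ofReal_mul
        (by positivity)]
    ring_nf
  simp_rw [h1]
  rw [lintegral_const_mul' _ _ ENNReal.ofReal_ne_top, ← mul_assoc, ← ENNReal.ofReal_mul (abs_nonneg _)]
  congr 2
  rw [← Real.rpow_add habs]
  nth_rw 1 [← Real.rpow_one |t|]
  rw [← Real.rpow_add habs]
  congr 1
  ring

lemma double_factor (A B : ℝ → ℝ → ℝ≥0∞)
    (hA : Measurable fun p : ℝ × ℝ => A p.1 p.2)
    (hAtop : ∀ x y, A x y ≠ ⊤) :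
    (∫⁻ s2, ∫⁻ s3, ∫⁻ w2, ∫⁻ w3, A s2 s3 * B w2 w3) =
      (∫⁻ s2, ∫⁻ s3, A s2 s3) * ∫⁻ w2, ∫⁻ w3, B w2 w3 := by
  have hA1 : ∀ s2, Measurable fun s3 => A s2 s3 := fun s2 => hA.of_uncurry_left
  have hA2 : Measurable fun s2 => ∫⁻ s3, A s2 s3 := hA.lintegral_prod_right'
  simp_rw [lintegral_const_mul' _ _ (hAtop _ _)]
  simp_rw [lintegral_mul_const _ (hA1 _), lintegral_mul_const _ hA2]

noncomputable def Gf (q1 q2 q3 c1 c2 c3 ν u : ℝ) : ℝ≥0∞ :=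
  ∫⁻ s2 : ℝ, ∫⁻ s3 : ℝ, ENNReal.ofReal
    (((c1 * |u| ^ (q1 / ν) + c2 * |s2| ^ (q2 / ν) + c3 * |s3| ^ (q3 / ν)) ^ ν)⁻¹)


section
variable {q1 q2 q3 c1 c2 c3 ν : ℝ}

lemma theta_factor (hc1 : 0 < c1) (hc2 : 0 < c2) (hc3 : 0 < c3) (t : ℝ) :
    theta q1 q2 q3 c1 c2 c3 ν t =
      ∫⁻ u : ℝ, Gf q1 q2 q3 c1 c2 c3 ν u * Gf q1 q2 q3 c1 c2 c3 ν (t - u) := by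
  unfold theta Gf
  refine lintegral_congr fun u => ?_
  have hX : ∀ v s2 s3 : ℝ, (0:ℝ) ≤ c1 * |v| ^ (q1 / ν) + c2 * |s2| ^ (q2 / ν) + c3 * |s3| ^ (q3 / ν) := by
    intro v s2 s3; positivity
  have hsplit : ∀ s2 s3 w2 w3 : ℝ,
      ENNReal.ofReal
        (((c1 * |u| ^ (q1 / ν) + c2 * |s2| ^ (q2 / ν) + c3 * |s3| ^ (q3 / ν)) ^ ν *
          (c1 * |t - u| ^ (q1 / ν) + c2 * |w2| ^ (q2 / ν) + c3 * |w3| ^ (q3 / ν)) ^ ν)⁻¹) =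
      ENNReal.ofReal (((c1 * |u| ^ (q1 / ν) + c2 * |s2| ^ (q2 / ν) + c3 * |s3| ^ (q3 / ν)) ^ ν)⁻¹) *
      ENNReal.ofReal (((c1 * |t - u| ^ (q1 / ν) + c2 * |w2| ^ (q2 / ν) + c3 * |w3| ^ (q3 / ν)) ^ ν)⁻¹) := by
    intro s2 s3 w2 w3
    rw [mul_inv, ENNReal.ofReal_mul (inv_nonneg.2 (Real.rpow_nonneg (hX u s2 s3) ν))]
  simp_rw [hsplit]
  exact double_factor _ _ (by fun_prop) (fun x y => ENNReal.ofReal_ne_top)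


lemma Gf_one :
    Gf q1 q2 q3 c1 c2 c3 ν 1 =
      ∫⁻ s2 : ℝ, ∫⁻ s3 : ℝ, ENNReal.ofReal
        (((c1 + c2 * |s2| ^ (q2 / ν) + c3 * |s3| ^ (q3 / ν)) ^ ν)⁻¹) := by
  unfold Gf
  simp [Real.one_rpow]

lemma Gf_scale (hq1 : 0 < q1) (hq2 : 0 < q2) (hq3 : 0 < q3)
    (hc1 : 0 < c1) (hc2 : 0 < c2) (hc3 : 0 < c3) (hν : 0 < ν)
    {u : ℝ} (hu : u ≠ 0) :
    Gf q1 q2 q3 c1 c2 c3 ν u =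
      ENNReal.ofReal (|u| ^ (q1 / q2 + q1 / q3 - q1)) * Gf q1 q2 q3 c1 c2 c3 ν 1 := by
  have habs : (0:ℝ) < |u| := abs_pos.2 hu
  set a2 := |u| ^ (q1 / q2) with ha2
  set a3 := |u| ^ (q1 / q3) with ha3
  have ha2p : 0 < a2 := Real.rpow_pos_of_pos habs _
  have ha3p : 0 < a3 := Real.rpow_pos_of_pos habs _
  have hpt : ∀ s2 s3 : ℝ,
      ENNReal.ofReal (((c1 * |u| ^ (q1 / ν) + c2 * |a2 * s2| ^ (q2 / ν) + c3 * |a3 * s3| ^ (q3 / ν)) ^ ν)⁻¹)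
        = ENNReal.ofReal ((|u| ^ q1)⁻¹) *
          ENNReal.ofReal (((c1 + c2 * |s2| ^ (q2 / ν) + c3 * |s3| ^ (q3 / ν)) ^ ν)⁻¹) := by
    intro s2 s3
    have key2 : a2 ^ (q2 / ν) = |u| ^ (q1 / ν) := by
      rw [ha2, ← Real.rpow_mul (abs_nonneg u)]
      congr 1
      field_simp
    have key3 : a3 ^ (q3 / ν) = |u| ^ (q1 / ν) := by
      rw [ha3, ← Real.rpow_mul (abs_nonneg u)]
      congr 1
      field_simp
    have e2 : |a2 * s2| ^ (q2 / ν) = |u| ^ (q1 / ν) * |s2| ^ (q2 / ν) := by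
      rw [abs_mul, abs_of_pos ha2p, Real.mul_rpow ha2p.le (abs_nonneg _), key2]
    have e3 : |a3 * s3| ^ (q3 / ν) = |u| ^ (q1 / ν) * |s3| ^ (q3 / ν) := by
      rw [abs_mul, abs_of_pos ha3p, Real.mul_rpow ha3p.le (abs_nonneg _), key3]
    have ebase : c1 * |u| ^ (q1 / ν) + c2 * |a2 * s2| ^ (q2 / ν) + c3 * |a3 * s3| ^ (q3 / ν)
        = |u| ^ (q1 / ν) * (c1 + c2 * |s2| ^ (q2 / ν) + c3 * |s3| ^ (q3 / ν)) := by
      rw [e2, e3]; ring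
    have epow : (|u| ^ (q1 / ν)) ^ ν = |u| ^ q1 := by
      rw [← Real.rpow_mul (abs_nonneg u), div_mul_cancel₀ q1 hν.ne']
    rw [ebase, Real.mul_rpow (by positivity) (by positivity), epow, mul_inv,
      ENNReal.ofReal_mul (by positivity)]
  have hmeasJ : Measurable fun p : ℝ × ℝ => ENNReal.ofReal
      (((c1 * |u| ^ (q1 / ν) + c2 * |p.1| ^ (q2 / ν) + c3 * |p.2| ^ (q3 / ν)) ^ ν)⁻¹) := by
    fun_prop
  have step1 : Gf q1 q2 q3 c1 c2 c3 ν u = ENNReal.ofReal |a2| *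
      ∫⁻ s2 : ℝ, ENNReal.ofReal |a3| * ∫⁻ s3 : ℝ, ENNReal.ofReal
        (((c1 * |u| ^ (q1 / ν) + c2 * |a2 * s2| ^ (q2 / ν) + c3 * |a3 * s3| ^ (q3 / ν)) ^ ν)⁻¹) := by
    rw [Gf, lintegral_scale a2 ha2p.ne' _ hmeasJ.lintegral_prod_right']
    congr 1
    refine lintegral_congr fun s2 => ?_
    exact lintegral_scale a3 ha3p.ne' _ (by fun_prop)
  rw [step1, abs_of_pos ha2p, abs_of_pos ha3p]
  simp_rw [hpt, lintegral_const_mul' _ _ ENNReal.ofReal_ne_top]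
  rw [← Gf_one, ← mul_assoc, ← mul_assoc,
    ← ENNReal.ofReal_mul ha2p.le, ← ENNReal.ofReal_mul (mul_pos ha2p ha3p).le]
  congr 2
  rw [← Real.rpow_neg (abs_nonneg u), ha2, ha3, ← Real.rpow_add habs, ← Real.rpow_add habs]
  ring_nf


lemma Gf_one_lt_top (hq2 : 0 < q2) (hq3 : 0 < q3)
    (hc1 : 0 < c1) (hc2 : 0 < c2) (hc3 : 0 < c3) (hν : 0 < ν)
    (h23 : 1 / q2 + 1 / q3 < 1) :
    Gf q1 q2 q3 c1 c2 c3 ν 1 < ⊤ := by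
  set θ : ℝ := (1 / q2 + 1 - 1 / q3) / 2 with hθ
  have hq2' : 0 < 1 / q2 := by positivity
  have hq3' : 0 < 1 / q3 := by positivity
  have hθ2 : 1 / q2 < θ := by rw [hθ]; linarith
  have hθ3 : 1 / q3 < 1 - θ := by rw [hθ]; linarith
  have hθ0 : 0 < θ := lt_trans hq2' hθ2
  have hθ1 : θ < 1 := by linarith
  set m : ℝ := min c1 (min c2 c3) with hm
  have hm0 : 0 < m := lt_min hc1 (lt_min hc2 hc3)
  have hmc1 : m ≤ c1 := min_le_left _ _
  have hmc2 : m ≤ c2 := le_trans (min_le_right _ _) (min_le_left _ _)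
  have hmc3 : m ≤ c3 := le_trans (min_le_right _ _) (min_le_right _ _)
  rw [Gf_one]
  set C0 : ℝ≥0∞ := ENNReal.ofReal ((m ^ ν)⁻¹) with hC0
  have key : ∀ s2 s3 : ℝ,
      ENNReal.ofReal (((c1 + c2 * |s2| ^ (q2 / ν) + c3 * |s3| ^ (q3 / ν)) ^ ν)⁻¹) ≤
      (C0 * ENNReal.ofReal (((1 + |s2| ^ (q2 / ν)) ^ (θ * ν))⁻¹)) *
        ENNReal.ofReal (((1 + |s3| ^ (q3 / ν)) ^ ((1 - θ) * ν))⁻¹) := by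
    intro s2 s3
    set x : ℝ := |s2| ^ (q2 / ν) with hx
    set y : ℝ := |s3| ^ (q3 / ν) with hy
    have hx0 : 0 ≤ x := Real.rpow_nonneg (abs_nonneg _) _
    have hy0 : 0 ≤ y := Real.rpow_nonneg (abs_nonneg _) _
    have step2 : (1 + x) ^ θ * (1 + y) ^ (1 - θ) ≤ 1 + x + y := by
      rcases le_total (1 + x) (1 + y) with h | h
      · calc (1 + x) ^ θ * (1 + y) ^ (1 - θ)
            ≤ (1 + y) ^ θ * (1 + y) ^ (1 - θ) := by
              exact mul_le_mul_of_nonneg_right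
                (Real.rpow_le_rpow (by positivity) h hθ0.le)
                (Real.rpow_nonneg (by positivity) _)
          _ = (1 + y) ^ (θ + (1 - θ)) := (Real.rpow_add (by positivity) _ _).symm
          _ = 1 + y := by norm_num
          _ ≤ 1 + x + y := by linarith
      · calc (1 + x) ^ θ * (1 + y) ^ (1 - θ)
            ≤ (1 + x) ^ θ * (1 + x) ^ (1 - θ) := by
              exact mul_le_mul_of_nonneg_left
                (Real.rpow_le_rpow (by positivity) h (by linarith))
                (Real.rpow_nonneg (by positivity) _)
          _ = (1 + x) ^ (θ + (1 - θ)) := (Real.rpow_add (by positivity) _ _).symm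
          _ = 1 + x := by norm_num
          _ ≤ 1 + x + y := by linarith
    have step1 : m * ((1 + x) ^ θ * (1 + y) ^ (1 - θ)) ≤ c1 + c2 * x + c3 * y := by
      calc m * ((1 + x) ^ θ * (1 + y) ^ (1 - θ)) ≤ m * (1 + x + y) :=
            mul_le_mul_of_nonneg_left step2 hm0.le
        _ ≤ c1 + c2 * x + c3 * y := by nlinarith
    have step3 : m ^ ν * ((1 + x) ^ (θ * ν) * (1 + y) ^ ((1 - θ) * ν)) ≤
        (c1 + c2 * x + c3 * y) ^ ν := by
      have h1 : (m * ((1 + x) ^ θ * (1 + y) ^ (1 - θ))) ^ ν ≤ (c1 + c2 * x + c3 * y) ^ ν :=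
        Real.rpow_le_rpow (by positivity) step1 hν.le
      calc m ^ ν * ((1 + x) ^ (θ * ν) * (1 + y) ^ ((1 - θ) * ν))
          = (m * ((1 + x) ^ θ * (1 + y) ^ (1 - θ))) ^ ν := by
            rw [Real.mul_rpow hm0.le (by positivity), Real.mul_rpow (by positivity) (by positivity),
              Real.rpow_mul (by positivity), Real.rpow_mul (by positivity)]
        _ ≤ _ := h1
    have hinv : ((c1 + c2 * x + c3 * y) ^ ν)⁻¹ ≤
        (m ^ ν)⁻¹ * (((1 + x) ^ (θ * ν))⁻¹ * ((1 + y) ^ ((1 - θ) * ν))⁻¹) := by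
      rw [← mul_inv, ← mul_inv]
      exact inv_anti₀ (by positivity) step3
    calc ENNReal.ofReal (((c1 + c2 * x + c3 * y) ^ ν)⁻¹)
        ≤ ENNReal.ofReal ((m ^ ν)⁻¹ * (((1 + x) ^ (θ * ν))⁻¹ * ((1 + y) ^ ((1 - θ) * ν))⁻¹)) :=
          ENNReal.ofReal_le_ofReal hinv
      _ = (C0 * ENNReal.ofReal (((1 + x) ^ (θ * ν))⁻¹)) *
            ENNReal.ofReal (((1 + y) ^ ((1 - θ) * ν))⁻¹) := by
          rw [ENNReal.ofReal_mul (by positivity), ENNReal.ofReal_mul (by positivity), ← mul_assoc]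
  have hJQ : (∫⁻ s3 : ℝ, ENNReal.ofReal (((1 + |s3| ^ (q3 / ν)) ^ ((1 - θ) * ν))⁻¹)) < ⊤ := by
    have h1θ : (0:ℝ) < 1 - θ := by linarith
    refine aux1 (by positivity) (mul_pos h1θ hν) ?_
    have e : q3 / ν * ((1 - θ) * ν) = (1 - θ) * q3 := by field_simp
    rw [e]
    calc (1:ℝ) = (1/q3) * q3 := by field_simp
      _ < (1 - θ) * q3 := mul_lt_mul_of_pos_right hθ3 hq3
  have hJP : (∫⁻ s2 : ℝ, ENNReal.ofReal (((1 + |s2| ^ (q2 / ν)) ^ (θ * ν))⁻¹)) < ⊤ := by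
    refine aux1 (by positivity) (mul_pos hθ0 hν) ?_
    have e : q2 / ν * (θ * ν) = θ * q2 := by field_simp
    rw [e]
    calc (1:ℝ) = (1/q2) * q2 := by field_simp
      _ < θ * q2 := mul_lt_mul_of_pos_right hθ2 hq2
  calc (∫⁻ s2 : ℝ, ∫⁻ s3 : ℝ, ENNReal.ofReal
        (((c1 + c2 * |s2| ^ (q2 / ν) + c3 * |s3| ^ (q3 / ν)) ^ ν)⁻¹))
      ≤ ∫⁻ s2 : ℝ, ∫⁻ s3 : ℝ, (C0 * ENNReal.ofReal (((1 + |s2| ^ (q2 / ν)) ^ (θ * ν))⁻¹)) *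
          ENNReal.ofReal (((1 + |s3| ^ (q3 / ν)) ^ ((1 - θ) * ν))⁻¹) :=
        lintegral_mono fun s2 => lintegral_mono fun s3 => key s2 s3
    _ = ∫⁻ s2 : ℝ, (C0 * ENNReal.ofReal (((1 + |s2| ^ (q2 / ν)) ^ (θ * ν))⁻¹)) *
          ∫⁻ s3 : ℝ, ENNReal.ofReal (((1 + |s3| ^ (q3 / ν)) ^ ((1 - θ) * ν))⁻¹) := by
        refine lintegral_congr fun s2 => ?_
        exact lintegral_const_mul' _ _ (ENNReal.mul_ne_top ENNReal.ofReal_ne_top ENNReal.ofReal_ne_top)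
    _ = (∫⁻ s2 : ℝ, C0 * ENNReal.ofReal (((1 + |s2| ^ (q2 / ν)) ^ (θ * ν))⁻¹)) *
          ∫⁻ s3 : ℝ, ENNReal.ofReal (((1 + |s3| ^ (q3 / ν)) ^ ((1 - θ) * ν))⁻¹) :=
        lintegral_mul_const' _ _ hJQ.ne
    _ = (C0 * ∫⁻ s2 : ℝ, ENNReal.ofReal (((1 + |s2| ^ (q2 / ν)) ^ (θ * ν))⁻¹)) *
          ∫⁻ s3 : ℝ, ENNReal.ofReal (((1 + |s3| ^ (q3 / ν)) ^ ((1 - θ) * ν))⁻¹) := by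
        rw [lintegral_const_mul' _ _ ENNReal.ofReal_ne_top]
    _ < ⊤ := ENNReal.mul_lt_top (ENNReal.mul_lt_top ENNReal.ofReal_lt_top hJP) hJQ


lemma theta_eq (hq1 : 0 < q1) (hq2 : 0 < q2) (hq3 : 0 < q3)
    (hc1 : 0 < c1) (hc2 : 0 < c2) (hc3 : 0 < c3) (hν : 0 < ν) (t : ℝ) :
    theta q1 q2 q3 c1 c2 c3 ν t = Iint (q1 / q2 + q1 / q3 - q1) t *
      (Gf q1 q2 q3 c1 c2 c3 ν 1 * Gf q1 q2 q3 c1 c2 c3 ν 1) := by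
  rw [theta_factor hc1 hc2 hc3 t]
  have h0 : ∀ᵐ u : ℝ, u ≠ 0 := by
    rw [ae_iff]
    have e : {a : ℝ | ¬ a ≠ 0} = {0} := by ext u; simp
    rw [e]
    exact measure_singleton 0
  have ht0 : ∀ᵐ u : ℝ, u ≠ t := by
    rw [ae_iff]
    have e : {a : ℝ | ¬ a ≠ t} = {t} := by ext u; simp
    rw [e]
    exact measure_singleton t
  have hae : ∀ᵐ u : ℝ, Gf q1 q2 q3 c1 c2 c3 ν u * Gf q1 q2 q3 c1 c2 c3 ν (t - u) =
      ENNReal.ofReal (|u| ^ (q1 / q2 + q1 / q3 - q1) * |t - u| ^ (q1 / q2 + q1 / q3 - q1)) *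
        (Gf q1 q2 q3 c1 c2 c3 ν 1 * Gf q1 q2 q3 c1 c2 c3 ν 1) := by
    filter_upwards [h0, ht0] with u hu0 hut
    rw [Gf_scale hq1 hq2 hq3 hc1 hc2 hc3 hν hu0,
      Gf_scale hq1 hq2 hq3 hc1 hc2 hc3 hν (sub_ne_zero.2 (Ne.symm hut)),
      ENNReal.ofReal_mul (Real.rpow_nonneg (abs_nonneg _) _)]
    ring
  rw [lintegral_congr_ae hae, lintegral_mul_const _ (by fun_prop)]
  rw [Iint]


theorem stmt_18 (q1 q2 q3 c1 c2 c3 ν : ℝ)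
    (hq1 : 0 < q1) (hq2 : 0 < q2) (hq3 : 0 < q3)
    (hc1 : 0 < c1) (hc2 : 0 < c2) (hc3 : 0 < c3) (hν : 0 < ν)
    (hlow : 1 / (2 * q1) + 1 / q2 + 1 / q3 < 1)
    (hup : 1 < 1 / q1 + 1 / q2 + 1 / q3) :
    ∀ t : ℝ, t ≠ 0 →
      theta q1 q2 q3 c1 c2 c3 ν t < ⊤ ∧
      theta q1 q2 q3 c1 c2 c3 ν t = theta q1 q2 q3 c1 c2 c3 ν 1 *
        ENNReal.ofReal (|t| ^ (1 + 2 * q1 * (1 / q2 + 1 / q3 - 1))) := by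
  intro t ht
  set β : ℝ := q1 / q2 + q1 / q3 - q1 with hβdef
  have hβ1 : -1 < β := by
    have key := mul_lt_mul_of_pos_left hup hq1
    rw [mul_one, mul_add, mul_add, mul_one_div, mul_one_div, mul_one_div, div_self hq1.ne'] at key
    rw [hβdef]; linarith
  have hβ2 : 2 * β < -1 := by
    have h2q1 : (0:ℝ) < 2 * q1 := by positivity
    have key := mul_lt_mul_of_pos_left hlow h2q1
    rw [mul_one, mul_add, mul_add, mul_one_div, mul_one_div, mul_one_div,
      div_self h2q1.ne'] at key
    have e2 : 2 * q1 / q2 = 2 * (q1 / q2) := by ring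
    have e3 : 2 * q1 / q3 = 2 * (q1 / q3) := by ring
    rw [hβdef]; rw [e2, e3] at key; linarith
  have h23 : 1 / q2 + 1 / q3 < 1 := by
    have : (0:ℝ) < 1 / (2 * q1) := by positivity
    linarith
  have hIt : Iint β t < ⊤ := by
    rw [Iint_scale ht]
    exact ENNReal.mul_lt_top ENNReal.ofReal_lt_top (Iint_one_lt_top hβ1 hβ2)
  have hG1 : Gf q1 q2 q3 c1 c2 c3 ν 1 < ⊤ := Gf_one_lt_top hq2 hq3 hc1 hc2 hc3 hν h23
  constructor
  · rw [theta_eq hq1 hq2 hq3 hc1 hc2 hc3 hν t]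
    exact ENNReal.mul_lt_top hIt (ENNReal.mul_lt_top hG1 hG1)
  · rw [theta_eq hq1 hq2 hq3 hc1 hc2 hc3 hν t, theta_eq hq1 hq2 hq3 hc1 hc2 hc3 hν 1,
      Iint_scale ht]
    have hexp : 1 + 2 * β = 1 + 2 * q1 * (1 / q2 + 1 / q3 - 1) := by rw [hβdef]; ring
    rw [hexp]
    ring


end
end
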